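/- arXiv:1108.3658 — 8 statements merged into one kernel-verified Lean document; each statement's English description precedes it below -/
import Mathlib

section
/- A quasigroup satisfying the Moufang identity $x((yz)x) = (xy)(zx)$ has a two-sided neutral element, i.e., is a loop. -/
theorem moufang_quasigroup_is_loop_M1 (Q : Type*) (mul ld rd : Q → Q → Q)
    (hQ1 : ∀ x y, ld x (mul x y) = y) (hQ2 : ∀ x y, mul x (ld x y) = y)
    (hQ3 : ∀ x y, rd (mul x y) y = x) (hQ4 : ∀ x y, mul (rd x y) y = x)
    [Nonempty Q]
    (hid : ∀ x y z, mul x (mul (mul y z) x) = mul (mul x y) (mul z x)) :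
    ∃ e : Q, ∀ x, mul e x = x ∧ mul x e = x := by
  have lcancel : ∀ a b c, mul a b = mul a c → b = c := by
    intro a b c h
    have := congrArg (ld a) h
    rwa [hQ1, hQ1] at this
  have rcancel : ∀ a b c, mul b a = mul c a → b = c := by
    intro a b c h
    have := congrArg (fun t => rd t a) h
    simpa [hQ3] using this
  -- for every x, ld x x is a left identity
  have hleft : ∀ x z, mul (ld x x) z = z := by
    intro x z
    have h := hid x (ld x x) z
    rw [hQ2 x x] at h
    have h2 : mul (mul (ld x x) z) x = mul z x := lcancel x _ _ h
    exact rcancel x _ _ h2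
  obtain ⟨x₀⟩ := ‹Nonempty Q›
  set e := ld x₀ x₀ with he
  have hL : ∀ z, mul e z = z := hleft x₀
  -- e is also a right identity
  have key : ∀ y z, mul (mul y z) e = mul y (mul z e) := by
    intro y z
    have h := hid e y z
    rw [hL y, hL (mul (mul y z) e)] at h
    exact h
  have hR : ∀ w, mul w e = w := by
    intro w
    have h := key (rd w e) e
    rw [hL e] at h
    rw [hQ4 w e] at h
    exact h
  exact ⟨e, fun x => ⟨hL x, hR x⟩⟩
end

section
/- In a loop, the four Moufang identities $x((yz)x)=(xy)(zx)$, $(x(yz))x=(xy)(zx)$, $x(y(xz))=((xy)x)z$, and $((xy)z)y=x(y(zy))$ are pairwise equivalent: if a loop satisfies any one of them, it satisfies all four. -/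
section MoufangAux

variable {Q : Type*}

/-- Core lemma: in any loop, the identity M2 `(x(yz))x = (xy)(zx)` is equivalent to
M3 `x(y(xz)) = ((xy)x)z`. -/
private lemma moufang_core (mul ld rd : Q → Q → Q) (e : Q)
    (hQ1 : ∀ x y, ld x (mul x y) = y) (hQ2 : ∀ x y, mul x (ld x y) = y)
    (hQ3 : ∀ x y, rd (mul x y) y = x) (hQ4 : ∀ x y, mul (rd x y) y = x)
    (hL : ∀ x, mul e x = x) (hR : ∀ x, mul x e = x) :
    (∀ x y z, mul (mul x (mul y z)) x = mul (mul x y) (mul z x)) ↔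
    (∀ x y z, mul x (mul y (mul x z)) = mul (mul (mul x y) x) z) := by
  -- basic cancellation
  have lcancel : ∀ x a b, mul x a = mul x b → a = b := by
    intro x a b hab
    rw [← hQ1 x a, hab, hQ1]
  have rcancel : ∀ x a b, mul a x = mul b x → a = b := by
    intro x a b hab
    rw [← hQ3 a x, hab, hQ3]
  set i : Q → Q := fun x => ld x e with hi
  have xi : ∀ x, mul x (i x) = e := fun x => hQ2 x e
  constructor
  · -- M2 → M3
    intro h
    have flex : ∀ x z, mul (mul x z) x = mul x (mul z x) := by
      intro x z
      have h0 := h x e z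
      rwa [hL, hR] at h0
    have ixx : ∀ x, mul (i x) x = e := by
      intro x
      apply lcancel x
      rw [hR, ← flex, xi, hL]
    have xiz : ∀ x z, mul x (mul (i x) z) = z := by
      intro x z
      apply rcancel x
      have h0 := h x (i x) z
      rwa [xi, hL] at h0
    have lip : ∀ x w, mul (i x) (mul x w) = w := by
      intro x w
      apply lcancel x
      rw [xiz]
    have ii : ∀ x, i (i x) = x := by
      intro x
      apply lcancel (i x)
      rw [xi, ixx]
    have rip : ∀ w x, mul (mul w x) (i x) = w := by
      intro w x
      have id1 : mul (mul x (mul (rd w (i x)) (i x))) x = mul x (rd w (i x)) := by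
        have h0 := h x (rd w (i x)) (i x)
        rwa [ixx, hR] at h0
      rw [hQ4] at id1
      rw [flex] at id1
      have h2 : mul w x = rd w (i x) := lcancel x _ _ id1
      calc mul (mul w x) (i x) = mul (rd w (i x)) (i x) := by rw [h2]
        _ = w := hQ4 w (i x)
    have anti : ∀ a b, i (mul a b) = mul (i b) (i a) := by
      intro a b
      have s1 : mul (i (mul a b)) a = i b := by
        have h5 := lip (mul a b) (i b)
        rwa [rip a b] at h5
      have s2 := rip (i (mul a b)) a
      rw [s1] at s2
      exact s2.symm
    have rip' : ∀ p q, mul (mul p (i q)) q = p := by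
      intro p q
      have h0 := rip p (i q)
      rwa [ii] at h0
    have m3aux : ∀ x u v, mul (mul (mul x u) x) (mul (i x) v) = mul x (mul u v) := by
      intro x u v
      have step : mul (mul x u) x = mul (mul x (mul u v)) (mul (i v) x) := by
        have h0 := h x (mul u v) (i v)
        rwa [rip u v] at h0
      have hv : mul (i x) v = i (mul (i v) x) := by
        rw [anti, ii]
      rw [step, hv]
      exact rip (mul x (mul u v)) (mul (i v) x)
    intro x y z
    have h0 := m3aux x y (mul x z)
    rw [lip] at h0
    exact h0.symm
  · -- M3 → M2
    intro h
    have ixx : ∀ x, mul (i x) x = e := by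
      intro x
      apply lcancel x
      have h0 := h x (i x) e
      rw [hR, xi, hL, hR] at h0
      rw [hR]
      exact h0
    have lip : ∀ x w, mul (i x) (mul x w) = w := by
      intro x w
      apply lcancel x
      have h0 := h x (i x) w
      rwa [xi, hL] at h0
    have ii : ∀ x, i (i x) = x := by
      intro x
      apply lcancel (i x)
      rw [xi, ixx]
    have xiz : ∀ x z, mul x (mul (i x) z) = z := by
      intro x z
      have h0 := lip (i x) z
      rwa [ii] at h0
    have u_ix : ∀ u x, mul u (i x) = rd u x := by
      intro u x
      have h0 := h x (ld x (rd u x)) (i x)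
      rw [xi, hR, hQ2, hQ4] at h0
      exact h0.symm
    have rip : ∀ w x, mul (mul w x) (i x) = w := by
      intro w x
      rw [u_ix]
      exact hQ3 w x
    have anti : ∀ a b, i (mul a b) = mul (i b) (i a) := by
      intro a b
      have s1 : mul (i (mul a b)) a = i b := by
        have h5 := lip (mul a b) (i b)
        rwa [rip a b] at h5
      have s2 := rip (i (mul a b)) a
      rw [s1] at s2
      exact s2.symm
    have rip' : ∀ p q, mul (mul p (i q)) q = p := by
      intro p q
      have h0 := rip p (i q)
      rwa [ii] at h0
    have m3aux : ∀ x u v, mul (mul (mul x u) x) (mul (i x) v) = mul x (mul u v) := by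
      intro x u v
      have h0 := h x u (mul (i x) v)
      rw [xiz] at h0
      exact h0.symm
    intro x y z
    have s := m3aux x (mul y z) (i z)
    rw [rip y z] at s
    have hzx : mul (i x) (i z) = i (mul z x) := (anti z x).symm
    rw [hzx] at s
    have h0 := rip' (mul (mul x (mul y z)) x) (mul z x)
    rw [s] at h0
    exact h0.symm

/-- M1 `x((yz)x) = (xy)(zx)` is equivalent to M2 `(x(yz))x = (xy)(zx)` in any loop. -/
private lemma moufang_m1_iff_m2 (mul ld rd : Q → Q → Q) (e : Q)
    (hQ1 : ∀ x y, ld x (mul x y) = y) (hQ2 : ∀ x y, mul x (ld x y) = y)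
    (hQ3 : ∀ x y, rd (mul x y) y = x) (hQ4 : ∀ x y, mul (rd x y) y = x)
    (hL : ∀ x, mul e x = x) (hR : ∀ x, mul x e = x) :
    (∀ x y z, mul x (mul (mul y z) x) = mul (mul x y) (mul z x)) ↔
    (∀ x y z, mul (mul x (mul y z)) x = mul (mul x y) (mul z x)) := by
  constructor
  · intro h x y z
    have flex : ∀ a b, mul (mul a b) a = mul a (mul b a) := by
      intro a b
      have h0 := h a b e
      rw [hR, hL] at h0
      exact h0.symm
    rw [flex]
    exact h x y z
  · intro h x y z
    have flex : ∀ a b, mul (mul a b) a = mul a (mul b a) := by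
      intro a b
      have h0 := h a e b
      rwa [hL, hR] at h0
    rw [← flex]
    exact h x y z

end MoufangAux

/-- In a loop, the four Moufang identities are pairwise equivalent. -/
theorem moufang_identities_equivalent_in_loops (Q : Type*) (mul ld rd : Q → Q → Q) (e : Q)
    (hQ1 : ∀ x y, ld x (mul x y) = y) (hQ2 : ∀ x y, mul x (ld x y) = y)
    (hQ3 : ∀ x y, rd (mul x y) y = x) (hQ4 : ∀ x y, mul (rd x y) y = x)
    (hL : ∀ x, mul e x = x) (hR : ∀ x, mul x e = x) :
    ((∀ x y z, mul x (mul (mul y z) x) = mul (mul x y) (mul z x)) ↔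
      (∀ x y z, mul (mul x (mul y z)) x = mul (mul x y) (mul z x))) ∧
    ((∀ x y z, mul x (mul (mul y z) x) = mul (mul x y) (mul z x)) ↔
      (∀ x y z, mul x (mul y (mul x z)) = mul (mul (mul x y) x) z)) ∧
    ((∀ x y z, mul x (mul (mul y z) x) = mul (mul x y) (mul z x)) ↔
      (∀ x y z, mul (mul (mul x y) z) y = mul x (mul y (mul z y)))) := by
  have h12 := moufang_m1_iff_m2 mul ld rd e hQ1 hQ2 hQ3 hQ4 hL hR
  have h23 := moufang_core mul ld rd e hQ1 hQ2 hQ3 hQ4 hL hR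
  -- opposite loop: gives M1 ↔ M4
  have hop := moufang_core (fun a b => mul b a) (fun a b => rd b a) (fun a b => ld b a) e
    (fun x y => hQ3 y x) (fun x y => hQ4 y x) (fun x y => hQ1 y x) (fun x y => hQ2 y x)
    (fun x => hR x) (fun x => hL x)
  have h14 : (∀ x y z, mul x (mul (mul y z) x) = mul (mul x y) (mul z x)) ↔
      (∀ x y z, mul (mul (mul x y) z) y = mul x (mul y (mul z y))) := by
    constructor
    · intro h1
      have h2' : ∀ x y z, mul x (mul (mul z y) x) = mul (mul x z) (mul y x) :=
        fun x y z => h1 x z y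
      have h3' := hop.mp h2'
      exact fun x y z => h3' y z x
    · intro h4
      have h3' : ∀ x y z, mul (mul (mul z x) y) x = mul z (mul x (mul y x)) :=
        fun x y z => h4 z x y
      have h2' := hop.mpr h3'
      exact fun x y z => h2' x z y
  exact ⟨h12, h12.trans h23, h14⟩
end

section
/- A quasigroup satisfying the extra-loop identity $((xy)z)x = x(y(zx))$ has a two-sided neutral element, i.e., is a loop. -/
theorem extra_quasigroup_is_loop (Q : Type*) (mul ld rd : Q → Q → Q)
    (hQ1 : ∀ x y, ld x (mul x y) = y) (hQ2 : ∀ x y, mul x (ld x y) = y)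
    (hQ3 : ∀ x y, rd (mul x y) y = x) (hQ4 : ∀ x y, mul (rd x y) y = x)
    [Nonempty Q]
    (hid : ∀ x y z, mul (mul (mul x y) z) x = mul x (mul y (mul z x))) :
    ∃ e : Q, ∀ x, mul e x = x ∧ mul x e = x := by
  have R0 : ∀ (v0 : Q) (v1 : Q), (ld v0 (mul v0 v1)) = v1 := fun v0 v1 => (hQ1 v0 v1)
  have R1 : ∀ (v0 : Q) (v1 : Q), (mul v0 (ld v0 v1)) = v1 := fun v0 v1 => (hQ2 v0 v1)
  have R2 : ∀ (v0 : Q) (v1 : Q), (rd (mul v0 v1) v1) = v0 := fun v0 v1 => (hQ3 v0 v1)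
  have R3 : ∀ (v0 : Q) (v1 : Q), (mul (rd v0 v1) v1) = v0 := fun v0 v1 => (hQ4 v0 v1)
  have R4 : ∀ (v0 : Q) (v1 : Q), (rd v1 (ld v0 v1)) = v0 := fun v0 v1 => (Eq.symm (Eq.trans (Eq.symm (R2 v0 (ld v0 v1))) (congrArg (fun w => (rd w (ld v0 v1))) (R1 v0 v1))))
  have R5 : ∀ (v0 : Q) (v1 : Q), (ld (rd v0 v1) v0) = v1 := fun v0 v1 => (Eq.symm (Eq.trans (Eq.symm (R0 (rd v0 v1) v1)) (congrArg (fun w => (ld (rd v0 v1) w)) (R3 v0 v1))))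
  have R6 : ∀ (v0 : Q) (v1 : Q) (v2 : Q), (mul (mul (mul v0 v1) v2) v0) = (mul v0 (mul v1 (mul v2 v0))) := fun v0 v1 v2 => (hid v0 v1 v2)
  have R7 : ∀ (v0 : Q) (v1 : Q) (v2 : Q), (ld (mul (mul v0 v1) v2) (mul v0 (mul v1 (mul v2 v0)))) = v0 := fun v0 v1 v2 => (Eq.symm (Eq.trans (Eq.symm (R0 (mul (mul v0 v1) v2) v0)) (congrArg (fun w => (ld (mul (mul v0 v1) v2) w)) (R6 v0 v1 v2))))
  have R8 : ∀ (v0 : Q) (v1 : Q) (v2 : Q), (mul v0 (mul v1 (mul (ld (mul v0 v1) v2) v0))) = (mul v2 v0) := fun v0 v1 v2 => (Eq.trans (Eq.symm (R6 v0 v1 (ld (mul v0 v1) v2))) (congrArg (fun w => (mul w v0)) (R1 (mul v0 v1) v2)))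
  have R9 : ∀ (v0 : Q) (v1 : Q) (v2 : Q), (rd (mul v0 (mul v1 (mul v2 v0))) v0) = (mul (mul v0 v1) v2) := fun v0 v1 v2 => (Eq.symm (Eq.trans (Eq.symm (R2 (mul (mul v0 v1) v2) v0)) (congrArg (fun w => (rd w v0)) (R6 v0 v1 v2))))
  have R10 : ∀ (v0 : Q) (v1 : Q) (v2 : Q), (ld (mul v1 v2) (mul v0 (mul (ld v0 v1) (mul v2 v0)))) = v0 := fun v0 v1 v2 => (Eq.symm (Eq.trans (Eq.symm (R7 v0 (ld v0 v1) v2)) (congrArg (fun w => (ld (mul w v2) (mul v0 (mul (ld v0 v1) (mul v2 v0))))) (R1 v0 v1))))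
  have R11 : ∀ (v0 : Q) (v1 : Q) (v2 : Q), (ld (mul (mul v1 (rd v0 (mul v2 v1))) v2) (mul v1 v0)) = v1 := fun v0 v1 v2 => (Eq.symm (Eq.trans (Eq.symm (R7 v1 (rd v0 (mul v2 v1)) v2)) (congrArg (fun w => (ld (mul (mul v1 (rd v0 (mul v2 v1))) v2) (mul v1 w))) (R3 v0 (mul v2 v1)))))
  have R12 : ∀ (v0 : Q) (v1 : Q) (v2 : Q), (ld (mul (mul v1 v2) (rd v0 v1)) (mul v1 (mul v2 v0))) = v1 := fun v0 v1 v2 => (Eq.symm (Eq.trans (Eq.symm (R7 v1 v2 (rd v0 v1))) (congrArg (fun w => (ld (mul (mul v1 v2) (rd v0 v1)) (mul v1 (mul v2 w)))) (R3 v0 v1))))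
  have R13 : ∀ (v0 : Q) (v1 : Q) (v2 : Q), (mul v1 (mul (ld (mul v0 v1) v2) v0)) = (ld v0 (mul v2 v0)) := fun v0 v1 v2 => (Eq.trans (Eq.symm (R0 v0 (mul v1 (mul (ld (mul v0 v1) v2) v0)))) (congrArg (fun w => (ld v0 w)) (R8 v0 v1 v2)))
  have R14 : ∀ (v0 : Q) (v1 : Q) (v2 : Q), (mul v0 (mul (ld v0 v1) (mul (ld v1 v2) v0))) = (mul v2 v0) := fun v0 v1 v2 => (Eq.symm (Eq.trans (Eq.symm (R8 v0 (ld v0 v1) v2)) (congrArg (fun w => (mul v0 (mul (ld v0 v1) (mul (ld w v2) v0)))) (R1 v0 v1))))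
  have R15 : ∀ (v0 : Q) (v1 : Q) (v2 : Q), (rd (mul v1 (mul v2 v0)) v1) = (mul (mul v1 v2) (rd v0 v1)) := fun v0 v1 v2 => (Eq.symm (Eq.trans (Eq.symm (R9 v1 v2 (rd v0 v1))) (congrArg (fun w => (rd (mul v1 (mul v2 w)) v1)) (R3 v0 v1))))
  have R16 : ∀ (v0 : Q) (v1 : Q), (mul (ld (mul v0 v1) v0) (mul v1 (mul v0 v1))) = (mul v0 v1) := fun v0 v1 => (Eq.symm (Eq.trans (Eq.symm (R10 (mul v0 v1) v0 v1)) (R0 (mul v0 v1) (mul (ld (mul v0 v1) v0) (mul v1 (mul v0 v1))))))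
  have R17 : ∀ (v0 : Q) (v1 : Q), (mul (ld v1 v0) (mul (ld v0 v1) v1)) = v1 := fun v0 v1 => (Eq.symm (Eq.trans (Eq.symm (R1 v0 v1)) (Eq.trans (Eq.trans (Eq.symm (R16 v0 (ld v0 v1))) (congrArg (fun w => (mul (ld w v0) (mul (ld v0 v1) (mul v0 (ld v0 v1))))) (R1 v0 v1))) (congrArg (fun w => (mul (ld v1 v0) (mul (ld v0 v1) w))) (R1 v0 v1)))))
  have R18 : ∀ (v0 : Q) (v1 : Q), (mul (ld v0 (rd v0 v1)) (mul v1 v0)) = v0 := fun v0 v1 => (Eq.symm (Eq.trans (Eq.symm (R3 v0 v1)) (Eq.trans (Eq.trans (Eq.symm (R16 (rd v0 v1) v1)) (congrArg (fun w => (mul (ld w (rd v0 v1)) (mul v1 (mul (rd v0 v1) v1)))) (R3 v0 v1))) (congrArg (fun w => (mul (ld v0 (rd v0 v1)) (mul v1 w))) (R3 v0 v1)))))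
  have R19 : ∀ (v0 : Q) (v1 : Q), (ld (ld v1 v0) v1) = (mul (ld v0 v1) v1) := fun v0 v1 => (Eq.symm (Eq.trans (Eq.symm (R0 (ld v1 v0) (mul (ld v0 v1) v1))) (congrArg (fun w => (ld (ld v1 v0) w)) (R17 v0 v1))))
  have R20 : ∀ (v0 : Q) (v1 : Q), (mul (ld v1 (rd v1 (rd v0 v1))) v0) = v1 := fun v0 v1 => (Eq.symm (Eq.trans (Eq.symm (R18 v1 (rd v0 v1))) (congrArg (fun w => (mul (ld v1 (rd v1 (rd v0 v1))) w)) (R3 v0 v1))))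
  have R21 : ∀ (v0 : Q) (v1 : Q), (mul (ld (mul v0 v1) v0) v0) = (ld v1 v0) := fun v0 v1 => (Eq.trans (Eq.symm (R19 (mul v0 v1) v0)) (congrArg (fun w => (ld w v0)) (R0 v0 v1)))
  have R22 : ∀ (v0 : Q) (v1 : Q), (ld v1 (rd v1 (rd v0 v1))) = (rd v1 v0) := fun v0 v1 => (Eq.trans (Eq.symm (R2 (ld v1 (rd v1 (rd v0 v1))) v0)) (congrArg (fun w => (rd w v0)) (R20 v0 v1)))
  have R23 : ∀ (v0 : Q) (v1 : Q), (ld (ld (mul v0 v1) v0) (ld v1 v0)) = v0 := fun v0 v1 => (Eq.symm (Eq.trans (Eq.symm (R0 (ld (mul v0 v1) v0) v0)) (congrArg (fun w => (ld (ld (mul v0 v1) v0) w)) (R21 v0 v1))))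
  have R24 : ∀ (v0 : Q) (v1 : Q), (rd v1 (rd v0 v1)) = (mul v1 (rd v1 v0)) := fun v0 v1 => (Eq.trans (Eq.symm (R1 v1 (rd v1 (rd v0 v1)))) (congrArg (fun w => (mul v1 w)) (R22 v0 v1)))
  have R25 : ∀ (v0 : Q) (v1 : Q), (ld (ld (mul v0 (rd v0 v1)) v0) v1) = v0 := fun v0 v1 => (Eq.symm (Eq.trans (Eq.symm (R23 v0 (rd v0 v1))) (congrArg (fun w => (ld (ld (mul v0 (rd v0 v1)) v0) w)) (R5 v0 v1))))
  have R26 : ∀ (v0 : Q) (v1 : Q), (mul v1 (rd v1 (mul v0 v1))) = (rd v1 v0) := fun v0 v1 => (Eq.trans (Eq.symm (R24 (mul v0 v1) v1)) (congrArg (fun w => (rd v1 w)) (R2 v0 v1)))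
  have R27 : ∀ (v0 : Q) (v1 : Q), (mul (mul v1 (rd v1 v0)) (rd v0 v1)) = v1 := fun v0 v1 => (Eq.symm (Eq.trans (Eq.symm (R3 v1 (rd v0 v1))) (congrArg (fun w => (mul w (rd v0 v1))) (R24 v0 v1))))
  have R28 : ∀ (v0 : Q) (v1 : Q), (rd (rd v1 v0) (rd v1 (mul v0 v1))) = v1 := fun v0 v1 => (Eq.symm (Eq.trans (Eq.symm (R2 v1 (rd v1 (mul v0 v1)))) (congrArg (fun w => (rd w (rd v1 (mul v0 v1)))) (R26 v0 v1))))
  have R29 : ∀ (v0 : Q) (v1 : Q), (mul (mul v1 v0) (rd (ld v0 v1) v1)) = v1 := fun v0 v1 => (Eq.symm (Eq.trans (Eq.symm (R27 (ld v0 v1) v1)) (congrArg (fun w => (mul (mul v1 w) (rd (ld v0 v1) v1))) (R4 v0 v1))))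
  have R30 : ∀ (v0 : Q) (v1 : Q) (v2 : Q), (ld (mul v2 (rd v0 v1)) (mul v1 (mul (ld v1 v2) v0))) = v1 := fun v0 v1 v2 => (Eq.symm (Eq.trans (Eq.symm (R10 v1 v2 (rd v0 v1))) (congrArg (fun w => (ld (mul v2 (rd v0 v1)) (mul v1 (mul (ld v1 v2) w)))) (R3 v0 v1))))
  have R31 : ∀ (v0 : Q) (v1 : Q) (v2 : Q), (ld (mul (mul v0 (rd (ld v0 v1) (mul v2 v0))) v2) v1) = v0 := fun v0 v1 v2 => (Eq.symm (Eq.trans (Eq.symm (R11 (ld v0 v1) v0 v2)) (congrArg (fun w => (ld (mul (mul v0 (rd (ld v0 v1) (mul v2 v0))) v2) w)) (R1 v0 v1))))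
  have R32 : ∀ (v0 : Q) (v1 : Q) (v2 : Q), (ld (mul (mul v2 (rd v1 v0)) (rd v0 v2)) (mul v2 v1)) = v2 := fun v0 v1 v2 => (Eq.symm (Eq.trans (Eq.symm (R11 v1 v2 (rd v0 v2))) (congrArg (fun w => (ld (mul (mul v2 (rd v1 w)) (rd v0 v2)) (mul v2 v1))) (R3 v0 v2))))
  have R33 : ∀ (v0 : Q) (v1 : Q) (v2 : Q), (ld (mul (mul v2 v0) (rd (ld v0 v1) v2)) (mul v2 v1)) = v2 := fun v0 v1 v2 => (Eq.symm (Eq.trans (Eq.symm (R12 (ld v0 v1) v2 v0)) (congrArg (fun w => (ld (mul (mul v2 v0) (rd (ld v0 v1) v2)) (mul v2 w))) (R1 v0 v1))))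
  have R34 : ∀ (v0 : Q) (v1 : Q) (v2 : Q), (mul (ld (mul v0 v1) v2) v0) = (ld v1 (ld v0 (mul v2 v0))) := fun v0 v1 v2 => (Eq.trans (Eq.symm (R0 v1 (mul (ld (mul v0 v1) v2) v0))) (congrArg (fun w => (ld v1 w)) (R13 v0 v1 v2)))
  have R35 : ∀ (v0 : Q) (v1 : Q) (v2 : Q), (rd (mul v1 v0) (mul (ld v0 v2) (mul (ld v2 v1) v0))) = v0 := fun v0 v1 v2 => (Eq.symm (Eq.trans (Eq.symm (R2 v0 (mul (ld v0 v2) (mul (ld v2 v1) v0)))) (congrArg (fun w => (rd w (mul (ld v0 v2) (mul (ld v2 v1) v0)))) (R14 v0 v2 v1))))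
  have R36 : ∀ (v0 : Q) (v1 : Q) (v2 : Q), (mul v0 (mul (ld v0 (rd v1 v2)) (mul v2 v0))) = (mul v1 v0) := fun v0 v1 v2 => (Eq.symm (Eq.trans (Eq.symm (R14 v0 (rd v1 v2) v1)) (congrArg (fun w => (mul v0 (mul (ld v0 (rd v1 v2)) (mul w v0)))) (R5 v1 v2))))
  have R37 : ∀ (v0 : Q) (v1 : Q), (mul (mul (mul v1 v0) v1) (rd v0 (mul v1 v0))) = (mul v1 v0) := fun v0 v1 => (Eq.trans (Eq.symm (R15 v0 (mul v1 v0) v1)) (R2 (mul v1 v0) (mul v1 v0)))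
  have R38 : ∀ (v0 : Q) (v1 : Q), (mul v1 (mul (ld v0 (rd v0 v1)) (rd v0 v1))) = (rd v0 v1) := fun v0 v1 => (Eq.symm (Eq.trans (Eq.symm (R17 v0 (rd v0 v1))) (congrArg (fun w => (mul w (mul (ld v0 (rd v0 v1)) (rd v0 v1)))) (R5 v0 v1))))
  have R39 : ∀ (v0 : Q) (v1 : Q), (mul (ld (ld v0 v1) (rd (ld v0 v1) v0)) v1) = (ld v0 v1) := fun v0 v1 => (Eq.symm (Eq.trans (Eq.symm (R18 (ld v0 v1) v0)) (congrArg (fun w => (mul (ld (ld v0 v1) (rd (ld v0 v1) v0)) w)) (R1 v0 v1))))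
  have R40 : ∀ (v0 : Q) (v1 : Q), (ld (ld (mul (mul v0 v1) v0) (mul v0 v1)) v1) = (mul v0 v1) := fun v0 v1 => (Eq.symm (Eq.trans (Eq.symm (R23 (mul v0 v1) v0)) (congrArg (fun w => (ld (ld (mul (mul v0 v1) v0) (mul v0 v1)) w)) (R0 v0 v1))))
  have R41 : ∀ (v0 : Q) (v1 : Q), (mul (ld v1 (ld (mul v0 (rd v0 v1)) v0)) (mul v0 v1)) = v1 := fun v0 v1 => (Eq.symm (Eq.trans (Eq.symm (R17 (ld (mul v0 (rd v0 v1)) v0) v1)) (congrArg (fun w => (mul (ld v1 (ld (mul v0 (rd v0 v1)) v0)) (mul w v1))) (R25 v0 v1))))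
  have R42 : ∀ (v0 : Q) (v1 : Q), (mul (mul (ld v0 v1) (rd (ld v0 v1) v1)) v0) = (ld v0 v1) := fun v0 v1 => (Eq.symm (Eq.trans (Eq.symm (R27 v1 (ld v0 v1))) (congrArg (fun w => (mul (mul (ld v0 v1) (rd (ld v0 v1) v1)) w)) (R4 v0 v1))))
  have R43 : ∀ (v0 : Q) (v1 : Q), (rd v0 (rd (mul v0 v1) (mul v1 (mul v0 v1)))) = (mul v0 v1) := fun v0 v1 => (Eq.symm (Eq.trans (Eq.symm (R28 v1 (mul v0 v1))) (congrArg (fun w => (rd w (rd (mul v0 v1) (mul v1 (mul v0 v1))))) (R2 v0 v1))))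
  have R44 : ∀ (v0 : Q) (v1 : Q), (ld (rd (ld v0 v1) v1) (mul v1 v0)) = (mul v0 (mul v1 v0)) := fun v0 v1 => (Eq.trans (Eq.trans (Eq.symm (R21 (mul v1 v0) (rd (ld v0 v1) v1))) (congrArg (fun w => (mul (ld w (mul v1 v0)) (mul v1 v0))) (R29 v0 v1))) (congrArg (fun w => (mul w (mul v1 v0))) (R0 v1 v0)))
  have R45 : ∀ (v0 : Q) (v1 : Q) (v2 : Q), (ld (mul (mul v1 (rd (ld v1 v2) v0)) (rd v0 v1)) v2) = v1 := fun v0 v1 v2 => (Eq.symm (Eq.trans (Eq.symm (R31 v1 v2 (rd v0 v1))) (congrArg (fun w => (ld (mul (mul v1 (rd (ld v1 v2) w)) (rd v0 v1)) v2)) (R3 v0 v1))))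
  have R46 : ∀ (v0 : Q) (v1 : Q) (v2 : Q), (mul (mul v0 (rd (ld v0 v1) (mul v2 v0))) v2) = (rd v1 v0) := fun v0 v1 v2 => (Eq.trans (Eq.symm (R4 (mul (mul v0 (rd (ld v0 v1) (mul v2 v0))) v2) v1)) (congrArg (fun w => (rd v1 w)) (R31 v0 v1 v2)))
  have R47 : ∀ (v0 : Q) (v1 : Q) (v2 : Q), (ld (mul (mul v0 v1) (rd (ld v1 (ld v0 v2)) v0)) v2) = v0 := fun v0 v1 v2 => (Eq.symm (Eq.trans (Eq.symm (R33 v1 (ld v0 v2) v0)) (congrArg (fun w => (ld (mul (mul v0 v1) (rd (ld v1 (ld v0 v2)) v0)) w)) (R1 v0 v2))))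
  have R48 : ∀ (v0 : Q) (v1 : Q), (ld (rd (ld v1 v1) v0) (mul v0 v1)) = (mul v0 (mul v0 v1)) := fun v0 v1 => (Eq.trans (Eq.symm (R21 (mul v0 v1) (rd (ld v1 v1) v0))) (congrArg (fun w => (mul w (mul v0 v1))) (R33 v1 v1 v0)))
  have R49 : ∀ (v0 : Q) (v1 : Q) (v2 : Q), (ld (ld v0 v1) (ld v0 (mul v2 v0))) = (mul (ld v1 v2) v0) := fun v0 v1 v2 => (Eq.trans (Eq.symm (R34 v0 (ld v0 v1) v2)) (congrArg (fun w => (mul (ld w v2) v0)) (R1 v0 v1)))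
  have R50 : ∀ (v0 : Q) (v1 : Q) (v2 : Q), (rd (mul (mul v0 v2) v1) (mul (ld v1 v0) (mul v2 v1))) = v1 := fun v0 v1 v2 => (Eq.symm (Eq.trans (Eq.symm (R35 v1 (mul v0 v2) v0)) (congrArg (fun w => (rd (mul (mul v0 v2) v1) (mul (ld v1 v0) (mul w v1)))) (R0 v0 v2))))
  have R51 : ∀ (v0 : Q) (v1 : Q) (v2 : Q), (rd v0 (mul (ld v1 v2) (mul (ld v2 (rd v0 v1)) v1))) = v1 := fun v0 v1 v2 => (Eq.symm (Eq.trans (Eq.symm (R35 v1 (rd v0 v1) v2)) (congrArg (fun w => (rd w (mul (ld v1 v2) (mul (ld v2 (rd v0 v1)) v1)))) (R3 v0 v1))))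
  have R52 : ∀ (v0 : Q) (v1 : Q) (v2 : Q), (mul v2 (mul (ld v2 (rd v1 (rd v0 v2))) v0)) = (mul v1 v2) := fun v0 v1 v2 => (Eq.symm (Eq.trans (Eq.symm (R36 v2 v1 (rd v0 v2))) (congrArg (fun w => (mul v2 (mul (ld v2 (rd v1 (rd v0 v2))) w))) (R3 v0 v2))))
  have R53 : ∀ (v0 : Q), (ld (mul (rd v0 v0) (rd (rd v0 v0) v0)) (rd v0 v0)) = v0 := fun v0 => (Eq.symm (Eq.trans (Eq.symm (R30 (rd v0 v0) v0 (rd v0 v0))) (congrArg (fun w => (ld (mul (rd v0 v0) (rd (rd v0 v0) v0)) w)) (R38 v0 v0))))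
  have R54 : ∀ (v0 : Q), (mul v0 (rd v0 v0)) = v0 := fun v0 => (Eq.symm (Eq.trans (Eq.symm (Eq.trans (congrArg (fun w => (ld (rd (rd v0 v0) v0) w)) (R0 (rd v0 v0) (rd v0 v0))) (R5 (rd v0 v0) v0))) (Eq.trans (Eq.symm (R34 (rd v0 v0) (rd (rd v0 v0) v0) (rd v0 v0))) (congrArg (fun w => (mul w (rd v0 v0))) (R53 v0)))))
  have R55 : ∀ (v0 : Q), (mul (ld v0 v0) v0) = v0 := fun v0 => (Eq.symm (Eq.trans (Eq.trans (Eq.symm (R41 (rd v0 v0) v0)) (congrArg (fun w => (mul (ld v0 w) (mul (rd v0 v0) v0))) (R53 v0))) (congrArg (fun w => (mul (ld v0 v0) w)) (R3 v0 v0))))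
  have R56 : ∀ (v0 : Q), (ld (rd (ld v0 v0) (ld v0 v0)) v0) = v0 := fun v0 => (Eq.symm (Eq.trans (Eq.symm (R17 v0 v0)) (Eq.trans (Eq.symm (R48 (ld v0 v0) v0)) (congrArg (fun w => (ld (rd (ld v0 v0) (ld v0 v0)) w)) (R55 v0)))))
  have R57 : ∀ (v0 : Q), (rd (ld v0 v0) (ld v0 v0)) = (rd v0 v0) := fun v0 => (Eq.trans (Eq.symm (R4 (rd (ld v0 v0) (ld v0 v0)) v0)) (congrArg (fun w => (rd v0 w)) (R56 v0)))
  have R58 : ∀ (v0 : Q), (mul (rd v0 v0) (ld v0 v0)) = (ld v0 v0) := fun v0 => (Eq.symm (Eq.trans (Eq.symm (R3 (ld v0 v0) (ld v0 v0))) (congrArg (fun w => (mul w (ld v0 v0))) (R57 v0))))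
  have R59 : ∀ (v0 : Q), (rd (ld v0 v0) (rd v0 v0)) = (ld v0 v0) := fun v0 => (Eq.symm (Eq.trans (Eq.symm (R54 (ld v0 v0))) (Eq.trans (Eq.symm (R24 (ld v0 v0) (ld v0 v0))) (congrArg (fun w => (rd (ld v0 v0) w)) (R57 v0)))))
  have R60 : ∀ (v0 : Q), (ld (mul v0 (rd (ld v0 v0) v0)) v0) = v0 := fun v0 => (Eq.symm (Eq.trans (Eq.trans (Eq.symm (R45 (ld v0 v0) v0 v0)) (congrArg (fun w => (ld (mul (mul v0 w) (rd (ld v0 v0) v0)) v0)) (R57 v0))) (congrArg (fun w => (ld (mul w (rd (ld v0 v0) v0)) v0)) (R54 v0))))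
  have R61 : ∀ (v0 : Q), (ld (mul v0 (rd (rd v0 v0) v0)) v0) = v0 := fun v0 => (Eq.symm (Eq.trans (Eq.trans (Eq.symm (R45 (rd v0 v0) v0 v0)) (congrArg (fun w => (ld (mul (mul v0 w) (rd (rd v0 v0) v0)) v0)) (R59 v0))) (congrArg (fun w => (ld (mul w (rd (rd v0 v0) v0)) v0)) (R1 v0 v0))))
  have R62 : ∀ (v0 : Q), (mul v0 (mul (ld v0 (ld v0 v0)) v0)) = v0 := fun v0 => (Eq.symm (Eq.trans (Eq.symm (R55 v0)) (Eq.trans (Eq.symm (R52 v0 (ld v0 v0) v0)) (congrArg (fun w => (mul v0 (mul (ld v0 w) v0))) (R59 v0)))))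
  have R63 : ∀ (v0 : Q), (mul (mul v0 (rd (ld v0 v0) v0)) v0) = v0 := fun v0 => (Eq.symm (Eq.trans (Eq.symm (R1 (mul v0 (rd (ld v0 v0) v0)) v0)) (congrArg (fun w => (mul (mul v0 (rd (ld v0 v0) v0)) w)) (R60 v0))))
  have R64 : ∀ (v0 : Q), (mul v0 (rd (ld v0 v0) v0)) = (rd v0 v0) := fun v0 => (Eq.trans (Eq.symm (R4 (mul v0 (rd (ld v0 v0) v0)) v0)) (congrArg (fun w => (rd v0 w)) (R60 v0)))
  have R65 : ∀ (v0 : Q), (mul (rd (rd v0 v0) v0) (mul v0 v0)) = v0 := fun v0 => (Eq.symm (Eq.trans (Eq.trans (Eq.symm (R17 (mul v0 (rd (rd v0 v0) v0)) v0)) (congrArg (fun w => (mul (ld v0 (mul v0 (rd (rd v0 v0) v0))) (mul w v0))) (R61 v0))) (congrArg (fun w => (mul w (mul v0 v0))) (R0 v0 (rd (rd v0 v0) v0)))))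
  have R66 : ∀ (v0 : Q), (mul (ld v0 (ld v0 v0)) v0) = (ld v0 v0) := fun v0 => (Eq.trans (Eq.symm (R0 v0 (mul (ld v0 (ld v0 v0)) v0))) (congrArg (fun w => (ld v0 w)) (R62 v0)))
  have R67 : ∀ (v0 : Q), (mul (mul v0 v0) (ld v0 (ld v0 v0))) = v0 := fun v0 => (Eq.symm (Eq.trans (Eq.symm (Eq.trans (congrArg (fun w => (mul v0 w)) (R66 v0)) (R1 v0 v0))) (Eq.trans (Eq.trans (Eq.symm (R37 (mul (ld v0 (ld v0 v0)) v0) v0)) (congrArg (fun w => (mul (mul (mul v0 (mul (ld v0 (ld v0 v0)) v0)) v0) (rd (mul (ld v0 (ld v0 v0)) v0) w))) (R62 v0))) (Eq.trans (Eq.trans (congrArg (fun w => (mul (mul (mul v0 w) v0) (rd (mul (ld v0 (ld v0 v0)) v0) v0))) (R66 v0)) (congrArg (fun w => (mul (mul w v0) (rd (mul (ld v0 (ld v0 v0)) v0) v0))) (R1 v0 v0))) (congrArg (fun w => (mul (mul v0 v0) w)) (R2 (ld v0 (ld v0 v0)) v0))))))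
  have R68 : ∀ (v0 : Q), (rd v0 (mul (ld v0 v0) (ld v0 v0))) = v0 := fun v0 => (Eq.symm (Eq.trans (Eq.trans (Eq.symm (R50 v0 v0 (rd (ld v0 v0) v0))) (congrArg (fun w => (rd w (mul (ld v0 v0) (mul (rd (ld v0 v0) v0) v0)))) (R63 v0))) (congrArg (fun w => (rd v0 (mul (ld v0 v0) w))) (R3 (ld v0 v0) v0))))
  have R69 : ∀ (v0 : Q), (ld (mul (rd v0 v0) (rd v0 v0)) v0) = v0 := fun v0 => (Eq.symm (Eq.trans (Eq.trans (Eq.symm (R32 v0 (ld v0 v0) v0)) (congrArg (fun w => (ld (mul w (rd v0 v0)) (mul v0 (ld v0 v0)))) (R64 v0))) (congrArg (fun w => (ld (mul (rd v0 v0) (rd v0 v0)) w)) (R1 v0 v0))))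
  have R70 : ∀ (v0 : Q), (rd (rd v0 v0) v0) = (rd v0 (mul v0 v0)) := fun v0 => (Eq.trans (Eq.symm (R2 (rd (rd v0 v0) v0) (mul v0 v0))) (congrArg (fun w => (rd w (mul v0 v0))) (R65 v0)))
  have R71 : ∀ (v0 : Q), (ld (mul v0 v0) v0) = (ld v0 (ld v0 v0)) := fun v0 => (Eq.symm (Eq.trans (Eq.symm (R0 (mul v0 v0) (ld v0 (ld v0 v0)))) (congrArg (fun w => (ld (mul v0 v0) w)) (R67 v0))))
  have R72 : ∀ (v0 : Q), (mul (ld v0 v0) (ld v0 v0)) = (ld v0 v0) := fun v0 => (Eq.trans (Eq.symm (R5 v0 (mul (ld v0 v0) (ld v0 v0)))) (congrArg (fun w => (ld w v0)) (R68 v0)))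
  have R73 : ∀ (v0 : Q), (mul (rd v0 v0) (rd v0 v0)) = (rd v0 v0) := fun v0 => (Eq.trans (Eq.symm (R4 (mul (rd v0 v0) (rd v0 v0)) v0)) (congrArg (fun w => (rd v0 w)) (R69 v0)))
  have R74 : ∀ (v0 : Q), (mul (rd v0 (mul v0 v0)) v0) = (rd v0 v0) := fun v0 => (Eq.symm (Eq.trans (Eq.symm (R3 (rd v0 v0) v0)) (congrArg (fun w => (mul w v0)) (R70 v0))))
  have R75 : ∀ (v0 : Q), (ld (ld v0 v0) (ld v0 v0)) = (ld v0 v0) := fun v0 => (Eq.symm (Eq.trans (Eq.symm (R0 (ld v0 v0) (ld v0 v0))) (congrArg (fun w => (ld (ld v0 v0) w)) (R72 v0))))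
  have R76 : ∀ (v0 : Q) (v1 : Q), (ld (mul (ld v0 v1) (rd (ld v0 v1) v1)) (ld v0 v1)) = v0 := fun v0 v1 => (Eq.symm (Eq.trans (Eq.symm (R0 (mul (ld v0 v1) (rd (ld v0 v1) v1)) v0)) (congrArg (fun w => (ld (mul (ld v0 v1) (rd (ld v0 v1) v1)) w)) (R42 v0 v1))))
  have R77 : ∀ (v0 : Q) (v1 : Q), (rd (ld v0 v1) v1) = (rd (mul v1 v0) (mul v0 (mul v1 v0))) := fun v0 v1 => (Eq.trans (Eq.symm (R4 (rd (ld v0 v1) v1) (mul v1 v0))) (congrArg (fun w => (rd (mul v1 v0) w)) (R44 v0 v1)))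
  have R78 : ∀ (v0 : Q) (v1 : Q) (v2 : Q), (ld (mul v0 (rd (ld v0 v1) (mul v2 v0))) (rd v1 v0)) = v2 := fun v0 v1 v2 => (Eq.symm (Eq.trans (Eq.symm (R0 (mul v0 (rd (ld v0 v1) (mul v2 v0))) v2)) (congrArg (fun w => (ld (mul v0 (rd (ld v0 v1) (mul v2 v0))) w)) (R46 v0 v1 v2))))
  have R79 : ∀ (v0 : Q) (v1 : Q), (ld (rd (ld v0 v0) v1) (rd v0 v0)) = v1 := fun v0 v1 => (Eq.symm (Eq.trans (Eq.trans (Eq.symm (R78 (ld v0 v0) (ld v0 v0) v1)) (congrArg (fun w => (ld (mul (ld v0 v0) (rd (ld (ld v0 v0) (ld v0 v0)) (mul v1 (ld v0 v0)))) w)) (R57 v0))) (Eq.trans (congrArg (fun w => (ld (mul (ld v0 v0) (rd w (mul v1 (ld v0 v0)))) (rd v0 v0))) (R75 v0)) (congrArg (fun w => (ld w (rd v0 v0))) (R26 v1 (ld v0 v0))))))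
  have R80 : ∀ (v0 : Q) (v1 : Q), (mul (rd v1 (ld v0 v0)) (rd v0 v0)) = v1 := fun v0 v1 => (Eq.symm (Eq.trans (Eq.symm (R79 v0 v1)) (Eq.trans (Eq.trans (Eq.symm (R39 (rd (ld v0 v0) v1) (rd v0 v0))) (congrArg (fun w => (mul (ld w (rd (ld (rd (ld v0 v0) v1) (rd v0 v0)) (rd (ld v0 v0) v1))) (rd v0 v0))) (R79 v0 v1))) (Eq.trans (Eq.trans (congrArg (fun w => (mul (ld v1 (rd w (rd (ld v0 v0) v1))) (rd v0 v0))) (R79 v0 v1)) (congrArg (fun w => (mul (ld v1 w) (rd v0 v0))) (R24 (ld v0 v0) v1))) (congrArg (fun w => (mul w (rd v0 v0))) (R0 v1 (rd v1 (ld v0 v0))))))))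
  have R81 : ∀ (v0 : Q) (v1 : Q) (v2 : Q), (mul (mul v1 v0) (rd (ld v0 (ld v1 v2)) v1)) = (rd v2 v1) := fun v0 v1 v2 => (Eq.trans (Eq.symm (R4 (mul (mul v1 v0) (rd (ld v0 (ld v1 v2)) v1)) v2)) (congrArg (fun w => (rd v2 w)) (R47 v1 v0 v2)))
  have R82 : ∀ (v0 : Q) (v1 : Q), (ld (rd (ld (ld v0 v1) (ld v0 v1)) v0) v1) = (mul v0 v1) := fun v0 v1 => (Eq.symm (Eq.trans (Eq.symm (congrArg (fun w => (mul v0 w)) (R1 v0 v1))) (Eq.trans (Eq.symm (R48 v0 (ld v0 v1))) (congrArg (fun w => (ld (rd (ld (ld v0 v1) (ld v0 v1)) v0) w)) (R1 v0 v1)))))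
  have R83 : ∀ (v0 : Q) (v1 : Q) (v2 : Q), (ld v1 (mul (mul v0 v2) v1)) = (mul (ld v1 v0) (mul v2 v1)) := fun v0 v1 v2 => (Eq.symm (Eq.trans (Eq.symm (R5 (mul (mul v0 v2) v1) (mul (ld v1 v0) (mul v2 v1)))) (congrArg (fun w => (ld w (mul (mul v0 v2) v1))) (R50 v0 v1 v2))))
  have R84 : ∀ (v0 : Q) (v1 : Q), (ld (mul (mul v1 (rd (rd v1 v1) v0)) (rd v0 v1)) v1) = v1 := fun v0 v1 => (Eq.symm (Eq.trans (Eq.symm (R32 v0 (rd v1 v1) v1)) (congrArg (fun w => (ld (mul (mul v1 (rd (rd v1 v1) v0)) (rd v0 v1)) w)) (R54 v1))))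
  have R85 : ∀ (v0 : Q) (v1 : Q), (ld (mul v0 (rd (ld (rd v0 v0) v1) v0)) (mul v0 v1)) = v0 := fun v0 v1 => (Eq.symm (Eq.trans (Eq.symm (R33 (rd v0 v0) v1 v0)) (congrArg (fun w => (ld (mul w (rd (ld (rd v0 v0) v1) v0)) (mul v0 v1))) (R54 v0))))
  have R86 : ∀ (v0 : Q) (v1 : Q), (ld (rd v0 v0) (ld v0 (mul v1 v0))) = (mul (ld v0 v1) v0) := fun v0 v1 => (Eq.trans (Eq.symm (R34 v0 (rd v0 v0) v1)) (congrArg (fun w => (mul (ld w v1) v0)) (R54 v0)))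
  have R87 : ∀ (v0 : Q) (v1 : Q), (mul (mul v0 (rd (ld v0 v1) v0)) (ld v0 v0)) = (rd v1 v0) := fun v0 v1 => (Eq.symm (Eq.trans (Eq.symm (R46 v0 v1 (ld v0 v0))) (congrArg (fun w => (mul (mul v0 (rd (ld v0 v1) w)) (ld v0 v0))) (R55 v0))))
  have R88 : ∀ (v0 : Q) (v1 : Q), (ld (ld v0 v1) (ld v0 v0)) = (mul (ld v1 (ld v0 v0)) v0) := fun v0 v1 => (Eq.symm (Eq.trans (Eq.symm (R49 v0 v1 (ld v0 v0))) (congrArg (fun w => (ld (ld v0 v1) (ld v0 w))) (R55 v0))))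
  have R89 : ∀ (v0 : Q) (v1 : Q), (rd (ld v0 v1) v0) = (mul (ld v0 v1) (rd (mul v1 v0) (mul v0 (mul v1 v0)))) := fun v0 v1 => (Eq.symm (Eq.trans (Eq.symm (congrArg (fun w => (mul (ld v0 v1) w)) (R77 v0 v1))) (Eq.trans (Eq.symm (R4 (mul (ld v0 v1) (rd (ld v0 v1) v1)) (ld v0 v1))) (congrArg (fun w => (rd (ld v0 v1) w)) (R76 v0 v1)))))
  have R90 : ∀ (v0 : Q) (v1 : Q) (v2 : Q), (ld (mul v1 (rd (ld v1 (mul v0 v1)) (mul v2 v1))) v0) = v2 := fun v0 v1 v2 => (Eq.symm (Eq.trans (Eq.symm (R78 v1 (mul v0 v1) v2)) (congrArg (fun w => (ld (mul v1 (rd (ld v1 (mul v0 v1)) (mul v2 v1))) w)) (R2 v0 v1))))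
  have R91 : ∀ (v0 : Q) (v1 : Q), (ld (mul v0 (mul (ld v0 v1) (rd (mul v1 v0) (mul v0 (mul v1 v0))))) (rd v1 v0)) = (ld v0 v0) := fun v0 v1 => (Eq.symm (Eq.trans (Eq.trans (Eq.symm (R78 v0 v1 (ld v0 v0))) (congrArg (fun w => (ld (mul v0 (rd (ld v0 v1) w)) (rd v1 v0))) (R55 v0))) (congrArg (fun w => (ld (mul v0 w) (rd v1 v0))) (R89 v0 v1))))
  have R92 : ∀ (v0 : Q) (v1 : Q), (rd (rd v1 (ld v0 v0)) (rd v1 (mul (rd v0 v0) v1))) = v1 := fun v0 v1 => (Eq.symm (Eq.trans (Eq.symm (R80 v0 v1)) (Eq.trans (Eq.trans (Eq.symm (R43 (rd v1 (ld v0 v0)) (rd v0 v0))) (congrArg (fun w => (rd (rd v1 (ld v0 v0)) (rd w (mul (rd v0 v0) (mul (rd v1 (ld v0 v0)) (rd v0 v0)))))) (R80 v0 v1))) (congrArg (fun w => (rd (rd v1 (ld v0 v0)) (rd v1 (mul (rd v0 v0) w)))) (R80 v0 v1)))))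
  have R93 : ∀ (v0 : Q) (v1 : Q), (mul (mul v1 (ld (mul v0 v1) v0)) (rd v0 v1)) = (rd v0 v1) := fun v0 v1 => (Eq.symm (Eq.trans (Eq.symm (R81 (ld (mul v0 v1) v0) v1 v0)) (congrArg (fun w => (mul (mul v1 (ld (mul v0 v1) v0)) (rd w v1))) (R23 v0 v1))))
  have R94 : ∀ (v0 : Q) (v1 : Q), (rd (ld (ld v0 v1) (ld v0 v1)) v0) = (rd v1 (mul v0 v1)) := fun v0 v1 => (Eq.trans (Eq.symm (R4 (rd (ld (ld v0 v1) (ld v0 v1)) v0) v1)) (congrArg (fun w => (rd v1 w)) (R82 v0 v1)))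
  have R95 : ∀ (v0 : Q) (v1 : Q), (mul (mul v1 (rd (rd v1 v1) v0)) (rd v0 v1)) = (rd v1 v1) := fun v0 v1 => (Eq.trans (Eq.symm (R4 (mul (mul v1 (rd (rd v1 v1) v0)) (rd v0 v1)) v1)) (congrArg (fun w => (rd v1 w)) (R84 v0 v1)))
  have R96 : ∀ (v0 : Q) (v1 : Q), (mul (mul v0 (rd (ld (rd v0 v0) v1) v0)) v0) = (mul v0 v1) := fun v0 v1 => (Eq.symm (Eq.trans (Eq.symm (R1 (mul v0 (rd (ld (rd v0 v0) v1) v0)) (mul v0 v1))) (congrArg (fun w => (mul (mul v0 (rd (ld (rd v0 v0) v1) v0)) w)) (R85 v0 v1))))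
  have R97 : ∀ (v0 : Q) (v1 : Q), (mul (ld v0 v0) (ld (rd v0 v0) v1)) = v1 := fun v0 v1 => (Eq.trans (Eq.symm (congrArg (fun w => (mul (ld v0 v0) w)) (R3 (ld (rd v0 v0) v1) v0))) (Eq.trans (Eq.trans (Eq.symm (R83 v0 v0 (rd (ld (rd v0 v0) v1) v0))) (congrArg (fun w => (ld v0 w)) (R96 v0 v1))) (R0 v0 v1)))
  have R98 : ∀ (v0 : Q) (v1 : Q), (mul v0 (rd (ld (rd v0 v0) v1) v0)) = (rd (mul v0 v1) v0) := fun v0 v1 => (Eq.trans (Eq.symm (R4 (mul v0 (rd (ld (rd v0 v0) v1) v0)) (mul v0 v1))) (congrArg (fun w => (rd (mul v0 v1) w)) (R85 v0 v1)))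
  have R99 : ∀ (v0 : Q) (v1 : Q), (mul (mul v0 (mul (ld v0 v1) (rd (mul v1 v0) (mul v0 (mul v1 v0))))) (ld v0 v0)) = (rd v1 v0) := fun v0 v1 => (Eq.trans (Eq.symm (congrArg (fun w => (mul (mul v0 w) (ld v0 v0))) (R89 v0 v1))) (R87 v0 v1))
  have R100 : ∀ (v0 : Q) (v1 : Q), (mul (rd v1 (mul (rd v0 v0) v1)) (mul (ld v0 v0) v1)) = v1 := fun v0 v1 => (Eq.symm (Eq.trans (Eq.symm (R92 v0 v1)) (Eq.trans (Eq.trans (Eq.symm (R38 (rd v1 (ld v0 v0)) (rd v1 (mul (rd v0 v0) v1)))) (congrArg (fun w => (mul (rd v1 (mul (rd v0 v0) v1)) (mul (ld (rd v1 (ld v0 v0)) w) (rd (rd v1 (ld v0 v0)) (rd v1 (mul (rd v0 v0) v1)))))) (R92 v0 v1))) (Eq.trans (congrArg (fun w => (mul (rd v1 (mul (rd v0 v0) v1)) (mul w (rd (rd v1 (ld v0 v0)) (rd v1 (mul (rd v0 v0) v1)))))) (R5 v1 (ld v0 v0))) (congrArg (fun w => (mul (rd v1 (mul (rd v0 v0)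 v1)) (mul (ld v0 v0) w))) (R92 v0 v1))))))
  have R101 : ∀ (v0 : Q) (v1 : Q), (ld (rd v0 v0) (mul (ld v0 v0) v1)) = v1 := fun v0 v1 => (Eq.symm (Eq.trans (Eq.symm (R100 v0 v1)) (Eq.trans (Eq.trans (Eq.symm (R40 (rd v1 (mul (rd v0 v0) v1)) (mul (ld v0 v0) v1))) (congrArg (fun w => (ld (ld (mul w (rd v1 (mul (rd v0 v0) v1))) (mul (rd v1 (mul (rd v0 v0) v1)) (mul (ld v0 v0) v1))) (mul (ld v0 v0) v1))) (R100 v0 v1))) (Eq.trans (Eq.trans (congrArg (fun w => (ld (ld w (mul (rd v1 (mul (rd v0 v0) v1)) (mul (ld v0 v0) v1))) (mul (ld v0 v0) v1))) (R26 (rd v0 v0) v1)) (congrArg (fun w => (ld (ld (rd v1 (rd v0 v0)) w) (mul (ld v0 v0) v1))) (R100 v0 v1))) (congrArg (fun w => (ld w (mul (ld v0 v0) v1))) (R5 v1 (rd v0 v0)))))))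
  have R102 : ∀ (v0 : Q) (v1 : Q), (ld (rd v0 v1) (rd v0 v1)) = (mul v1 (ld (mul v0 v1) v0)) := fun v0 v1 => (Eq.symm (Eq.trans (Eq.trans (Eq.symm (R78 (rd v0 v1) v0 (mul v1 (ld (mul v0 v1) v0)))) (congrArg (fun w => (ld (mul (rd v0 v1) (rd (ld (rd v0 v1) v0) w)) (rd v0 (rd v0 v1)))) (R93 v0 v1))) (Eq.trans (congrArg (fun w => (ld (mul (rd v0 v1) w) (rd v0 (rd v0 v1)))) (R89 (rd v0 v1) v0)) (R91 (rd v0 v1) v0))))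
  have R103 : ∀ (v0 : Q) (v1 : Q), (ld (rd v1 (mul v0 v1)) (rd (ld v0 v1) (ld v0 v1))) = v0 := fun v0 v1 => (Eq.symm (Eq.trans (Eq.symm (R79 (ld v0 v1) v0)) (congrArg (fun w => (ld w (rd (ld v0 v1) (ld v0 v1)))) (R94 v0 v1))))
  have R104 : ∀ (v0 : Q) (v1 : Q), (rd (rd v1 v1) (rd v0 v1)) = (mul v1 (rd (rd v1 v1) v0)) := fun v0 v1 => (Eq.symm (Eq.trans (Eq.symm (R2 (mul v1 (rd (rd v1 v1) v0)) (rd v0 v1))) (congrArg (fun w => (rd w (rd v0 v1))) (R95 v0 v1))))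
  have R105 : ∀ (v0 : Q) (v1 : Q), (ld v0 (mul v1 v0)) = (mul (ld v0 v0) (mul (ld v0 v1) v0)) := fun v0 v1 => (Eq.trans (Eq.symm (R97 v0 (ld v0 (mul v1 v0)))) (congrArg (fun w => (mul (ld v0 v0) w)) (R86 v0 v1)))
  have R106 : ∀ (v0 : Q) (v1 : Q) (v2 : Q), (ld (mul v1 (rd (mul (ld v1 v1) (mul (ld v1 v0) v1)) (mul v2 v1))) v0) = v2 := fun v0 v1 v2 => (Eq.trans (Eq.symm (congrArg (fun w => (ld (mul v1 (rd w (mul v2 v1))) v0)) (R105 v1 v0))) (R90 v0 v1 v2))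
  have R107 : ∀ (v0 : Q) (v1 : Q), (rd (ld v0 v1) (ld v0 v1)) = (mul (rd v1 (mul v0 v1)) v0) := fun v0 v1 => (Eq.trans (Eq.symm (R1 (rd v1 (mul v0 v1)) (rd (ld v0 v1) (ld v0 v1)))) (congrArg (fun w => (mul (rd v1 (mul v0 v1)) w)) (R103 v0 v1)))
  have R108 : ∀ (v0 : Q) (v1 : Q), (ld (mul (ld v1 v1) (mul v0 (rd v1 v1))) v0) = (rd v1 v1) := fun v0 v1 => (Eq.symm (Eq.trans (Eq.trans (Eq.symm (R106 v0 (ld v1 v1) (rd v1 v1))) (congrArg (fun w => (ld (mul (ld v1 v1) (rd (mul (ld (ld v1 v1) (ld v1 v1)) (mul (ld (ld v1 v1) v0) (ld v1 v1))) w)) v0)) (R58 v1))) (Eq.trans (Eq.trans (Eq.trans (Eq.trans (Eq.trans (congrArg (fun w => (ld (mul (ld v1 v1) (rd (mul w (mul (ld (ld v1 v1) v0) (ld v1 v1))) (ld v1 v1))) v0)) (R88 v1 v1)) (congrArg (fun w => (ld (mul (ld v1 v1) (rd (mul w (mul (ld (ld v1 v1) v0) (ld v1 v1))) (ld v1 v1)))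 v0)) (R66 v1))) (congrArg (fun w => (ld (mul (ld v1 v1) w) v0)) (R15 (ld v1 v1) (ld v1 v1) (ld (ld v1 v1) v0)))) (congrArg (fun w => (ld (mul (ld v1 v1) (mul w (rd (ld v1 v1) (ld v1 v1)))) v0)) (R1 (ld v1 v1) v0))) (congrArg (fun w => (ld (mul (ld v1 v1) (mul v0 w)) v0)) (R107 v1 v1))) (congrArg (fun w => (ld (mul (ld v1 v1) (mul v0 w)) v0)) (R74 v1)))))
  have R109 : ∀ (v0 : Q) (v1 : Q), (ld (mul (ld v1 v1) v0) (rd v0 (rd v1 v1))) = (rd v1 v1) := fun v0 v1 => (Eq.symm (Eq.trans (Eq.symm (R108 (rd v0 (rd v1 v1)) v1)) (congrArg (fun w => (ld (mul (ld v1 v1) w) (rd v0 (rd v1 v1)))) (R3 v0 (rd v1 v1)))))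
  have R110 : ∀ (v0 : Q) (v1 : Q), (rd v0 (mul v0 (rd v1 v1))) = (rd v1 v1) := fun v0 v1 => (Eq.symm (Eq.trans (Eq.trans (Eq.symm (R51 v0 (rd v1 v1) (mul (ld v1 v1) v0))) (congrArg (fun w => (rd v0 (mul (ld (rd v1 v1) (mul (ld v1 v1) v0)) (mul w (rd v1 v1))))) (R109 v0 v1))) (Eq.trans (congrArg (fun w => (rd v0 (mul w (mul (rd v1 v1) (rd v1 v1))))) (R101 v1 v0)) (congrArg (fun w => (rd v0 (mul v0 w))) (R73 v1)))))
  have R111 : ∀ (v0 : Q) (v1 : Q), (rd v1 (rd v0 v0)) = v1 := fun v0 v1 => (Eq.trans (Eq.trans (Eq.symm (R46 (rd v0 v0) v1 (ld (rd v0 v0) v1))) (congrArg (fun w => (mul (mul (rd v0 v0) w) (ld (rd v0 v0) v1))) (R110 (ld (rd v0 v0) v1) v0))) (Eq.trans (congrArg (fun w => (mul w (ld (rd v0 v0) v1))) (R73 v0)) (R1 (rd v0 v0) v1)))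
  have R112 : ∀ (v0 : Q) (v1 : Q), (mul v0 (rd v1 v1)) = v0 := fun v0 v1 => (Eq.trans (Eq.symm (R111 v1 (mul v0 (rd v1 v1)))) (R2 v0 (rd v1 v1)))
  have R113 : ∀ (v0 : Q) (v1 : Q), (mul (rd v0 v0) v1) = v1 := fun v0 v1 => (Eq.symm (Eq.trans (Eq.symm (R111 v0 v1)) (Eq.trans (Eq.trans (Eq.symm (R38 v1 (rd v0 v0))) (congrArg (fun w => (mul (rd v0 v0) (mul (ld v1 w) (rd v1 (rd v0 v0))))) (R111 v0 v1))) (Eq.trans (congrArg (fun w => (mul (rd v0 v0) (mul (ld v1 v1) w))) (R111 v0 v1)) (congrArg (fun w => (mul (rd v0 v0) w)) (R55 v1))))))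
  have R114 : ∀ (v0 : Q) (v1 : Q), (ld (rd v0 v0) v1) = v1 := fun v0 v1 => (Eq.symm (Eq.trans (Eq.symm (Eq.trans (R111 v0 (mul (rd v0 v0) v1)) (R113 v0 v1))) (Eq.trans (Eq.trans (Eq.symm (R98 (rd v0 v0) v1)) (congrArg (fun w => (mul (rd v0 v0) w)) (R111 v0 (ld (rd (rd v0 v0) (rd v0 v0)) v1)))) (Eq.trans (Eq.trans (Eq.trans (R113 v0 (ld (rd (rd v0 v0) (rd v0 v0)) v1)) (congrArg (fun w => (ld w v1)) (R104 v0 v0))) (congrArg (fun w => (ld (mul v0 w) v1)) (R70 v0))) (congrArg (fun w => (ld w v1)) (R26 v0 v0))))))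
  have R115 : ∀ (v0 : Q) (v1 : Q), (mul (ld v1 v1) v0) = v0 := fun v0 v1 => (Eq.trans (Eq.symm (Eq.trans (Eq.trans (Eq.trans (Eq.trans (congrArg (fun w => (mul w (mul (ld (rd v1 v1) v0) (rd v1 v1)))) (R102 v1 v1)) (congrArg (fun w => (mul (mul v1 w) (mul (ld (rd v1 v1) v0) (rd v1 v1)))) (R71 v1))) (congrArg (fun w => (mul w (mul (ld (rd v1 v1) v0) (rd v1 v1)))) (R1 v1 (ld v1 v1)))) (congrArg (fun w => (mul (ld v1 v1) w)) (R112 (ld (rd v1 v1) v0) v1))) (congrArg (fun w => (mul (ld v1 v1) w)) (R114 v1 v0)))) (Eq.trans (Eq.trans (Eq.symm (R105 (rd v1 v1) v0)) (congrArg (fun w => (ld (rd v1 v1) w)) (R112 v0 v1))) (R114 v1 v0)))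
  have R116 : ∀ (v0 : Q) (v1 : Q), (mul v1 (ld v0 v0)) = v1 := fun v0 v1 => (Eq.symm (Eq.trans (Eq.symm (R111 v0 v1)) (Eq.trans (Eq.trans (Eq.symm (R99 (rd v0 v0) v1)) (congrArg (fun w => (mul (mul (rd v0 v0) (mul w (rd (mul v1 (rd v0 v0)) (mul (rd v0 v0) (mul v1 (rd v0 v0)))))) (ld (rd v0 v0) (rd v0 v0)))) (R114 v0 v1))) (Eq.trans (Eq.trans (Eq.trans (Eq.trans (Eq.trans (Eq.trans (Eq.trans (congrArg (fun w => (mul w (ld (rd v0 v0) (rd v0 v0)))) (R113 v0 (mul v1 (rd (mul v1 (rd v0 v0)) (mul (rd v0 v0) (mul v1 (rd v0 v0))))))) (congrArg (fun w => (mul (mul v1 (rd w (mul (rd v0 v0) (mul v1 (rd v0 v0))))) (ld (rd v0 v0) (rd v0 v0)))) (R112 v1 v0))) (congrArg (fun w => (mul (mul v1 (rd v1 w)) (ld (rd v0 v0) (rd v0 v0)))) (R113 v0 (mul v1 (rd v0 v0))))) (congrArg (fun w => (mul (mul v1 (rd v1 w)) (ld (rd v0 v0) (rd v0 v0)))) (R112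 v1 v0))) (congrArg (fun w => (mul w (ld (rd v0 v0) (rd v0 v0)))) (R112 v1 v1))) (congrArg (fun w => (mul v1 w)) (R102 v0 v0))) (congrArg (fun w => (mul v1 (mul v0 w))) (R71 v0))) (congrArg (fun w => (mul v1 w)) (R1 v0 (ld v0 v0)))))))
  have G0 : ∀ (v0 : Q) (v1 : Q), (mul v1 (ld v0 v0)) = v1 := fun v0 v1 => (R116 v0 v1)
  have G1 : ∀ (v0 : Q) (v1 : Q), (mul (ld v0 v0) v1) = v1 := fun v0 v1 => (R115 v1 v0)
  obtain ⟨a⟩ := ‹Nonempty Q›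
  exact ⟨ld a a, fun t => ⟨G1 a t, G0 a t⟩⟩
end

section
/- Every extra loop is a Moufang loop, i.e., a loop satisfying all three extra-loop identities satisfies the Moufang identity $x(y(xz)) = ((xy)x)z$. -/
/-- Every extra loop is a Moufang loop. -/
theorem extra_loop_is_moufang (Q : Type*) (mul ld rd : Q → Q → Q) (e : Q)
    (hQ1 : ∀ x y, ld x (mul x y) = y) (hQ2 : ∀ x y, mul x (ld x y) = y)
    (hQ3 : ∀ x y, rd (mul x y) y = x) (hQ4 : ∀ x y, mul (rd x y) y = x)
    (hL : ∀ x, mul e x = x) (hR : ∀ x, mul x e = x)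
    (hE1 : ∀ x y z, mul (mul x (mul y z)) y = mul (mul x y) (mul z y))
    (hE2 : ∀ x y z, mul (mul (mul x y) z) x = mul x (mul y (mul z x)))
    (hE3 : ∀ x y z, mul (mul y z) (mul y x) = mul y (mul (mul z y) x)) :
    ∀ x y z, mul x (mul y (mul x z)) = mul (mul (mul x y) x) z := by
  -- Flexibility: (a b) a = a (b a), from E2 with y := e.
  have flex : ∀ a b, mul (mul a b) a = mul a (mul b a) := by
    intro a b
    have h := hE2 a e b
    rwa [hR, hL] at h
  intro x y z
  -- It suffices to prove ((xy)x)u = x(y(xu)) for all u.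
  have key : ∀ u, mul (mul (mul x y) x) u = mul x (mul y (mul x u)) := by
    intro u
    -- E1 with (x y, x, rd u x): ((xy)(x·(u/x)))x = ((xy)x)((u/x)·x) = ((xy)x)u
    have h1 := hE1 (mul x y) x (rd u x)
    rw [hQ4] at h1
    -- E2 with (x, y, x·(u/x)): ((xy)(x·(u/x)))x = x(y((x·(u/x))x))
    have h2 := hE2 x y (mul x (rd u x))
    -- flexibility: (x·(u/x))x = x((u/x)x) = x u
    have h3 : mul (mul x (rd u x)) x = mul x u := by
      rw [flex, hQ4]
    rw [h3] at h2
    rw [← h1, h2]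
  exact (key z).symm
end

section
/- In a loop $Q$, the inner mapping group $\mathrm{Inn}(Q)$ (the stabilizer of the neutral element $1$ in the multiplication group $\mathrm{Mlt}(Q)$) is generated by the maps $R_xL_x^{-1}$, $R_xR_yR_{xy}^{-1}$, and $L_xL_yL_{yx}^{-1}$ for $x,y \in Q$. -/
/-- Left translation of a quasigroup, as a permutation. -/
def leftTr {Q : Type*} (mul ld : Q → Q → Q)
    (h1 : ∀ x y, ld x (mul x y) = y) (h2 : ∀ x y, mul x (ld x y) = y)
    (x : Q) : Equiv.Perm Q :=
  ⟨fun y => mul x y, fun y => ld x y, fun y => h1 x y, fun y => h2 x y⟩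

/-- Right translation of a quasigroup, as a permutation. -/
def rightTr {Q : Type*} (mul rd : Q → Q → Q)
    (h3 : ∀ x y, rd (mul x y) y = x) (h4 : ∀ x y, mul (rd x y) y = x)
    (x : Q) : Equiv.Perm Q :=
  ⟨fun y => mul y x, fun y => rd y x, fun y => h3 y x, fun y => h4 y x⟩

/-- the inner mapping group `Inn(Q) = Mlt(Q) ∩ Stab(e)` is generated by
the maps `R_x L_x⁻¹`, `R_x R_y R_{xy}⁻¹`, `L_x L_y L_{yx}⁻¹` (written here for a left
action, with composition `(f*g)(u) = f(g(u))`). -/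
theorem inner_mapping_group_generators (Q : Type*) (mul ld rd : Q → Q → Q) (e : Q)
    (hQ1 : ∀ x y, ld x (mul x y) = y) (hQ2 : ∀ x y, mul x (ld x y) = y)
    (hQ3 : ∀ x y, rd (mul x y) y = x) (hQ4 : ∀ x y, mul (rd x y) y = x)
    (hL : ∀ x, mul e x = x) (hR : ∀ x, mul x e = x) :
    letI L := leftTr mul ld hQ1 hQ2
    letI R := rightTr mul rd hQ3 hQ4
    Subgroup.closure
        ({φ | ∃ x, φ = (L x)⁻¹ * R x} ∪
         {φ | ∃ x y, φ = (R (mul x y))⁻¹ * (R y * R x)} ∪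
         {φ | ∃ x y, φ = (L (mul y x))⁻¹ * (L y * L x)}) =
      Subgroup.closure (Set.range L ∪ Set.range R) ⊓
        MulAction.stabilizer (Equiv.Perm Q) e := by
  set L := leftTr mul ld hQ1 hQ2 with hLdef
  set R := rightTr mul rd hQ3 hQ4 with hRdef
  set S : Set (Equiv.Perm Q) :=
      ({φ | ∃ x, φ = (L x)⁻¹ * R x} ∪
       {φ | ∃ x y, φ = (R (mul x y))⁻¹ * (R y * R x)} ∪
       {φ | ∃ x y, φ = (L (mul y x))⁻¹ * (L y * L x)}) with hS
  set H := Subgroup.closure S with hH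
  set T : Set (Equiv.Perm Q) := Set.range L ∪ Set.range R with hT
  set M := Subgroup.closure T with hM
  have Lapp : ∀ a u, L a u = mul a u := fun _ _ => rfl
  have Rapp : ∀ a u, R a u = mul u a := fun _ _ => rfl
  have Linv : ∀ a u, (L a)⁻¹ u = ld a u := fun _ _ => rfl
  have Rinv : ∀ a u, (R a)⁻¹ u = rd u a := fun _ _ => rfl
  have ldxx : ∀ x, ld x x = e := fun x => by
    have := hQ1 x e; rwa [hR] at this
  have rdxx : ∀ x, rd x x = e := fun x => by
    have := hQ3 e x; rwa [hL] at this
  have Re1 : R e = 1 := Equiv.ext fun u => hR u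
  have mem1 : ∀ x, (L x)⁻¹ * R x ∈ H := fun x =>
    Subgroup.subset_closure (Or.inl (Or.inl ⟨x, rfl⟩))
  have mem2 : ∀ x y, (R (mul x y))⁻¹ * (R y * R x) ∈ H := fun x y =>
    Subgroup.subset_closure (Or.inl (Or.inr ⟨x, y, rfl⟩))
  have mem3 : ∀ x y, (L (mul y x))⁻¹ * (L y * L x) ∈ H := fun x y =>
    Subgroup.subset_closure (Or.inr ⟨x, y, rfl⟩)
  have key2 : ∀ a u, (R (mul a u))⁻¹ * (L a * R u) ∈ H := by
    intro a u
    have hid : (R (mul a u))⁻¹ * (L a * R u) =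
        ((L (mul a u))⁻¹ * R (mul a u))⁻¹ * ((L (mul a u))⁻¹ * (L a * L u)) *
          ((L u)⁻¹ * R u) := by group
    rw [hid]
    exact mul_mem (mul_mem (inv_mem (mem1 _)) (mem3 u a)) (mem1 u)
  -- main lemma: for any φ in Mlt, (R (φ e))⁻¹ * φ ∈ H
  have main : ∀ φ, φ ∈ M → (R (φ e))⁻¹ * φ ∈ H := by
    intro φ hφ
    induction hφ using Subgroup.closure_induction_left with
    | one => simpa [Re1] using (one_mem H)
    | mul_left x hx y hy ih =>
      have hy' : y ∈ M := hy
      rcases hx with ⟨a, rfl⟩ | ⟨a, rfl⟩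
      · -- x = L a
        have hid : (R ((L a * y) e))⁻¹ * (L a * y) =
            ((R (mul a (y e)))⁻¹ * (L a * R (y e))) * ((R (y e))⁻¹ * y) := by
          have : (L a * y) e = mul a (y e) := rfl
          rw [this]; group
        rw [hid]
        exact mul_mem (key2 a (y e)) ih
      · -- x = R a
        have hid : (R ((R a * y) e))⁻¹ * (R a * y) =
            ((R (mul (y e) a))⁻¹ * (R a * R (y e))) * ((R (y e))⁻¹ * y) := by
          have : (R a * y) e = mul (y e) a := rfl
          rw [this]; group
        rw [hid]
        exact mul_mem (mem2 (y e) a) ih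
    | inv_mul_cancel x hx y hy ih =>
      rcases hx with ⟨a, rfl⟩ | ⟨a, rfl⟩
      · -- x = L a ; let b = (L a)⁻¹ (y e), so mul a b = y e
        set b := (L a)⁻¹ (y e) with hb
        have hab : mul a b = y e := hQ2 a (y e)
        have hid : (R (((L a)⁻¹ * y) e))⁻¹ * ((L a)⁻¹ * y) =
            ((R (mul a b))⁻¹ * (L a * R b))⁻¹ * ((R (y e))⁻¹ * y) := by
          have h1 : ((L a)⁻¹ * y) e = b := rfl
          rw [h1, hab]; group
        rw [hid]
        exact mul_mem (inv_mem (key2 a b)) ih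
      · -- x = R a ; let b = (R a)⁻¹ (y e), so mul b a = y e
        set b := (R a)⁻¹ (y e) with hb
        have hab : mul b a = y e := hQ4 (y e) a
        have hid : (R (((R a)⁻¹ * y) e))⁻¹ * ((R a)⁻¹ * y) =
            ((R (mul b a))⁻¹ * (R a * R b))⁻¹ * ((R (y e))⁻¹ * y) := by
          have h1 : ((R a)⁻¹ * y) e = b := rfl
          rw [h1, hab]; group
        rw [hid]
        exact mul_mem (inv_mem (mem2 b a)) ih
  apply le_antisymm
  · -- H ≤ M ⊓ stab
    rw [hH]
    refine le_inf ((Subgroup.closure_le _).mpr ?_) ((Subgroup.closure_le _).mpr ?_)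
    · rintro φ ((⟨x, rfl⟩ | ⟨x, y, rfl⟩) | ⟨x, y, rfl⟩)
      · exact mul_mem (inv_mem (Subgroup.subset_closure (Or.inl ⟨x, rfl⟩)))
          (Subgroup.subset_closure (Or.inr ⟨x, rfl⟩))
      · exact mul_mem (inv_mem (Subgroup.subset_closure (Or.inr ⟨_, rfl⟩)))
          (mul_mem (Subgroup.subset_closure (Or.inr ⟨y, rfl⟩))
            (Subgroup.subset_closure (Or.inr ⟨x, rfl⟩)))
      · exact mul_mem (inv_mem (Subgroup.subset_closure (Or.inl ⟨_, rfl⟩)))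
          (mul_mem (Subgroup.subset_closure (Or.inl ⟨y, rfl⟩))
            (Subgroup.subset_closure (Or.inl ⟨x, rfl⟩)))
    · rintro φ ((⟨x, rfl⟩ | ⟨x, y, rfl⟩) | ⟨x, y, rfl⟩)
      · show ((L x)⁻¹ * R x) • e = e
        simp only [Equiv.Perm.smul_def, Equiv.Perm.mul_apply, Rapp, Linv, hL, ldxx]
      · show ((R (mul x y))⁻¹ * (R y * R x)) • e = e
        simp only [Equiv.Perm.smul_def, Equiv.Perm.mul_apply, Rapp, Rinv, hL, rdxx]
      · show ((L (mul y x))⁻¹ * (L y * L x)) • e = e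
        simp only [Equiv.Perm.smul_def, Equiv.Perm.mul_apply, Lapp, Linv, hR, ldxx]
  · rintro φ ⟨hφM, hφs⟩
    have he : φ e = e := hφs
    have := main φ hφM
    rwa [he, Re1, inv_one, one_mul] at this
end

section
/- The factor loop of a conjugacy closed loop by its nucleus is an abelian group (Basarab's theorem). -/
/-- The nucleus of a loop: elements associating with all pairs of elements. -/
def nucleus {Q : Type*} (mul : Q → Q → Q) : Set Q :=
  {a | ∀ x y : Q, mul a (mul x y) = mul (mul a x) y ∧
       mul x (mul a y) = mul (mul x a) y ∧
       mul x (mul y a) = mul (mul x y) a}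

/-- Auxiliary notion: an autotopism of the magma `(Q, mul)`. -/
def IsAtp {Q : Type*} (mul : Q → Q → Q) (α β γ : Q → Q) : Prop :=
  ∀ s t, mul (α s) (β t) = γ (mul s t)

theorem IsAtp.comp {Q : Type*} {mul : Q → Q → Q} {α₁ β₁ γ₁ α₂ β₂ γ₂ : Q → Q}
    (h₁ : IsAtp mul α₁ β₁ γ₁) (h₂ : IsAtp mul α₂ β₂ γ₂) :
    IsAtp mul (fun s => α₁ (α₂ s)) (fun t => β₁ (β₂ t)) (fun s => γ₁ (γ₂ s)) := by
  intro s t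
  show mul (α₁ (α₂ s)) (β₁ (β₂ t)) = γ₁ (γ₂ (mul s t))
  rw [← h₂ s t]
  exact h₁ (α₂ s) (β₂ t)

theorem IsAtp.congr {Q : Type*} {mul : Q → Q → Q} {α β γ : Q → Q}
    (h : IsAtp mul α β γ) (β' γ' : Q → Q)
    (hβ : ∀ t, β t = β' t) (hγ : ∀ s, γ s = γ' s) : IsAtp mul α β' γ' := by
  intro s t
  rw [← hβ t, ← hγ (mul s t)]
  exact h s t

theorem IsAtp.inv {Q : Type*} {mul : Q → Q → Q} {α β γ : Q → Q}
    (h : IsAtp mul α β γ) (α' β' γ' : Q → Q)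
    (hα : ∀ v, α (α' v) = v) (hβ : ∀ v, β (β' v) = v) (hγ : ∀ v, γ' (γ v) = v) :
    IsAtp mul α' β' γ' := by
  intro s t
  have h1 := h (α' s) (β' t)
  rw [hα, hβ] at h1
  have h2 := congrArg γ' h1
  rw [hγ] at h2
  exact h2.symm

/-- If an autotopism has identity middle component, then `γ = L_g` where
`g := γ e` is a left-nuclear element. -/
theorem IsAtp.nuclear {Q : Type*} {mul : Q → Q → Q} {e : Q} {α β γ : Q → Q}
    (hL : ∀ x, mul e x = x) (hR : ∀ x, mul x e = x)
    (h : IsAtp mul α β γ) (hβ : ∀ t, β t = t) :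
    (∀ v, γ v = mul (γ e) v) ∧ (∀ s t, mul (γ e) (mul s t) = mul (mul (γ e) s) t) := by
  have hag : ∀ s, α s = γ s := by
    intro s
    have h1 := h s e
    rw [hβ, hR, hR] at h1
    exact h1
  have hγv : ∀ v, γ v = mul (γ e) v := by
    intro v
    have h1 := h e v
    rw [hβ, hL, hag] at h1
    exact h1.symm
  refine ⟨hγv, fun s t => ?_⟩
  have h1 := h s t
  rw [hβ, hag, hγv s, hγv (mul s t)] at h1
  exact h1.symm

/-- Basarab: the factor loop of a conjugacy closed loop by its
nucleus is an abelian group; equivalently, modulo the nucleus `N(Q)` the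
multiplication is commutative and associative. -/
theorem cc_loop_mod_nucleus_abelian_group (Q : Type*) (mul ld rd : Q → Q → Q) (e : Q)
    (hQ1 : ∀ x y, ld x (mul x y) = y) (hQ2 : ∀ x y, mul x (ld x y) = y)
    (hQ3 : ∀ x y, rd (mul x y) y = x) (hQ4 : ∀ x y, mul (rd x y) y = x)
    (hL : ∀ x, mul e x = x) (hR : ∀ x, mul x e = x)
    -- conjugacy closedness: conjugates of left (right) translations are
    -- left (right) translations
    (hCCL : ∀ x y, ∃ z, ∀ u, ld x (mul y (mul x u)) = mul z u)
    (hCCR : ∀ x y, ∃ w, ∀ u, rd (mul (mul u x) y) x = mul u w) :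
    (∀ x y, ∃ n ∈ nucleus mul, mul x y = mul (mul y x) n) ∧
    (∀ x y z, ∃ n ∈ nucleus mul, mul (mul x y) z = mul (mul x (mul y z)) n) := by
  -- basic facts
  have ldself : ∀ s, ld s s = e := by
    intro s
    have h := hQ1 s e
    rwa [hR] at h
  -- LCC in equational form: ((x*y)/x) * (x*u) = x * (y*u)
  have lcc : ∀ x y u, mul (rd (mul x y) x) (mul x u) = mul x (mul y u) := by
    intro x y u
    obtain ⟨z, hz⟩ := hCCL x (rd (mul x y) x)
    have h0 := hz e
    rw [hR, hR] at h0
    rw [hQ4, hQ1] at h0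
    have h1 := hz u
    rw [← h0] at h1
    have h2 := congrArg (mul x) h1
    rw [hQ2] at h2
    exact h2
  -- RCC in equational form: (u * ((x*y)/x)) * x = (u*x) * y
  have rcc : ∀ x y u, mul (mul u (rd (mul x y) x)) x = mul (mul u x) y := by
    intro x y u
    obtain ⟨w, hw⟩ := hCCR x y
    have h0 := hw e
    rw [hL, hL] at h0
    have h1 := hw u
    rw [← h0] at h1
    have h2 : mul (rd (mul (mul u x) y) x) x = mul (mul u (rd (mul x y) x)) x := by
      rw [h1]
    rw [hQ4] at h2
    exact h2.symm
  -- F4 pointwise: (u * (v/x)) * x = (u*x) * (x\v)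
  have rcc' : ∀ x u v, mul (mul u (rd v x)) x = mul (mul u x) (ld x v) := by
    intro x u v
    have h := rcc x (ld x v) u
    rwa [hQ2] at h
  -- F1 pointwise: x \ (n * (x*v)) = (x \ (n*x)) * v
  have f1 : ∀ x n v, ld x (mul n (mul x v)) = mul (ld x (mul n x)) v := by
    intro x n v
    obtain ⟨z, hz⟩ := hCCL x n
    have h0 := hz e
    rw [hR, hR] at h0
    have h1 := hz v
    rw [← h0] at h1
    exact h1
  -- basic autotopisms
  have hA : ∀ x, IsAtp mul (fun y => rd (mul x y) x) (fun t => mul x t) (fun s => mul x s) := by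
    intro x s t
    show mul (rd (mul x s) x) (mul x t) = mul x (mul s t)
    exact lcc x s t
  have hA' : ∀ x, IsAtp mul (fun y => ld x (mul y x)) (fun t => ld x t) (fun s => ld x s) := by
    intro x
    refine (hA x).inv _ _ _ ?_ ?_ ?_
    · intro v
      show rd (mul x (ld x (mul v x))) x = v
      rw [hQ2, hQ3]
    · intro v
      show mul x (ld x v) = v
      exact hQ2 x v
    · intro v
      show ld x (mul x v) = v
      exact hQ1 x v
  have hB : ∀ x, IsAtp mul (fun s => mul s x) (fun t => ld x (mul t x)) (fun s => mul s x) := by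
    intro x s t
    show mul (mul s x) (ld x (mul t x)) = mul (mul s t) x
    have h := rcc x (ld x (mul t x)) s
    rw [hQ2, hQ3] at h
    exact h.symm
  have hB' : ∀ x, IsAtp mul (fun s => rd s x) (fun t => rd (mul x t) x) (fun s => rd s x) := by
    intro x
    refine (hB x).inv _ _ _ ?_ ?_ ?_
    · intro v
      show mul (rd v x) x = v
      exact hQ4 v x
    · intro v
      show ld x (mul (rd (mul x v) x) x) = v
      rw [hQ4, hQ1]
    · intro v
      show rd (mul v x) x = v
      exact hQ3 v x
  -- the conjugated block C(x,u) = B_x ∘ A_u ∘ B_x⁻¹ with cleaned components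
  have hC : ∀ x u, IsAtp mul (fun s => mul (rd (mul u (rd s x)) u) x)
      (fun t => ld x (mul (mul u x) t)) (fun s => mul (mul u x) (ld x s)) := by
    intro x u
    have base := ((hB x).comp (hA u)).comp (hB' x)
    refine base.congr _ _ ?_ ?_
    · intro t
      show ld x (mul (mul u (rd (mul x t) x)) x) = ld x (mul (mul u x) t)
      rw [rcc x t u]
    · intro s
      show mul (mul u (rd s x)) x = mul (mul u x) (ld x s)
      exact rcc' x u s
  have hCinv : ∀ x u, IsAtp mul (fun t => mul (ld u (mul (rd t x) u)) x)
      (fun t => ld (mul u x) (mul x t)) (fun s => mul x (ld (mul u x) s)) := by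
    intro x u
    refine (hC x u).inv _ _ _ ?_ ?_ ?_
    · intro v
      show mul (rd (mul u (rd (mul (ld u (mul (rd v x) u)) x) x)) u) x = v
      rw [hQ3, hQ2, hQ3, hQ4]
    · intro v
      show ld x (mul (mul u x) (ld (mul u x) (mul x v))) = v
      rw [hQ2, hQ1]
    · intro v
      show mul x (ld (mul u x) (mul (mul u x) (ld x v))) = v
      rw [hQ1, hQ2]
  -- nucleus transfer lemmas
  have lam_mu : ∀ a, (∀ s t, mul a (mul s t) = mul (mul a s) t) →
      ∀ s t, mul s (mul a t) = mul (mul s a) t := by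
    intro a hla s t
    have h := lcc a (ld a (mul s a)) t
    rw [hQ2] at h
    rw [hla, hQ2] at h
    rw [hQ3] at h
    exact h
  have mu_rho : ∀ a, (∀ s t, mul s (mul a t) = mul (mul s a) t) →
      ∀ s t, mul s (mul t a) = mul (mul s t) a := by
    intro a ha s t
    have h := rcc' a s (mul t a)
    rw [hQ3] at h
    rw [← ha s (ld a (mul t a))] at h
    rw [hQ2] at h
    exact h.symm
  have mu_lam : ∀ a, (∀ s t, mul s (mul a t) = mul (mul s a) t) →
      ∀ s t, mul a (mul s t) = mul (mul a s) t := by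
    intro a ha s t
    have h := lcc a s t
    rw [ha (rd (mul a s) a) t] at h
    rw [hQ4] at h
    exact h.symm
  -- conjugation of nuclear elements: n ∈ N_μ implies x\(n*x) ∈ N_μ
  have hE : ∀ n w, (∀ s t, mul s (mul n t) = mul (mul s n) t) →
      ∀ s t, mul s (mul (ld w (mul n w)) t) = mul (mul s (ld w (mul n w))) t := by
    intro n w hn s t
    have hxm : ∀ v, mul w (mul (ld w (mul n w)) v) = mul n (mul w v) := by
      intro v
      conv_lhs => rw [← f1 w n v]
      rw [hQ2]
    have main : ∀ v, mul w (mul s (mul (ld w (mul n w)) v)) =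
        mul w (mul (ld w (mul (mul (rd (mul w s) w) n) w)) v) := by
      intro v
      rw [← lcc w s (mul (ld w (mul n w)) v)]
      rw [hxm v]
      rw [hn]
      rw [← f1 w (mul (rd (mul w s) w) n) v]
      rw [hQ2]
    have main2 : ∀ v, mul s (mul (ld w (mul n w)) v) =
        mul (ld w (mul (mul (rd (mul w s) w) n) w)) v := by
      intro v
      have h2 := congrArg (ld w) (main v)
      rw [hQ1, hQ1] at h2
      exact h2
    have h3 := main2 e
    rw [hR, hR] at h3
    rw [main2 t, ← h3]
  -- product closure of middle-nuclear elements
  have Nmu_mul : ∀ n m', (∀ s t, mul s (mul n t) = mul (mul s n) t) →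
      (∀ s t, mul s (mul m' t) = mul (mul s m') t) →
      ∀ s t, mul s (mul (mul n m') t) = mul (mul s (mul n m')) t := by
    intro n m' hn hm s t
    rw [← hm n t, hn s (mul m' t), hm (mul s n) t, ← mu_rho m' hm s n]
  -- push: a left-nuclear element can be pushed past any element
  have push : ∀ H, (∀ s t, mul H (mul s t) = mul (mul H s) t) →
      ∀ w, ∃ m, (∀ s t, mul s (mul m t) = mul (mul s m) t) ∧ mul H w = mul w m := by
    intro H hH w
    refine ⟨ld w (mul H w), hE H w (lam_mu H hH), ?_⟩
    exact (hQ2 w (mul H w)).symm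
  have mem_nuc : ∀ n, (∀ s t, mul s (mul n t) = mul (mul s n) t) → n ∈ nucleus mul := by
    intro n hn
    exact fun s t => ⟨mu_lam n hn s t, hn s t, mu_rho n hn s t⟩
  -- commutativity modulo the nucleus
  have comm : ∀ x y, ∃ n, (∀ s t, mul s (mul n t) = mul (mul s n) t) ∧
      mul x y = mul (mul y x) n := by
    intro x y
    have hCxy := (hC x (rd y x)).congr (fun t => ld x (mul y t)) (fun s => mul y (ld x s))
      (fun t => by
        show ld x (mul (mul (rd y x) x) t) = ld x (mul y t)
        rw [hQ4])
      (fun s => by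
        show mul (mul (rd y x) x) (ld x s) = mul y (ld x s)
        rw [hQ4])
    have W := (hA' y).comp ((hA x).comp hCxy)
    have Wid := W.congr (fun t => t) (fun s => ld y (mul x (mul y (ld x s))))
      (fun t => by
        show ld y (mul x (ld x (mul y t))) = t
        rw [hQ2, hQ1])
      (fun s => rfl)
    obtain ⟨hγv, hNg⟩ := Wid.nuclear hL hR (fun t => rfl)
    have hγv' : ∀ v, ld y (mul x (mul y (ld x v))) =
        mul (ld y (mul x (mul y (ld x e)))) v := hγv
    have hNg' : ∀ s t, mul (ld y (mul x (mul y (ld x e)))) (mul s t) =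
        mul (mul (ld y (mul x (mul y (ld x e)))) s) t := hNg
    have h11 := hγv' x
    simp only [ldself, hR] at h11
    have eq11 : mul x y = mul y (mul (ld y (mul x (mul y (ld x e)))) x) := by
      rw [← h11, hQ2]
    obtain ⟨m, hm, hGx⟩ := push _ hNg' x
    refine ⟨m, hm, ?_⟩
    rw [eq11, hGx, mu_rho m hm y x]
  -- associativity modulo the nucleus
  have assoc : ∀ a b z, ∃ n, (∀ s t, mul s (mul n t) = mul (mul s n) t) ∧
      mul (mul a b) z = mul (mul a (mul b z)) n := by
    intro a b z
    have B1 := (hC (mul b z) (rd b (mul b z))).congr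
      (fun t => ld (mul b z) (mul b t)) (fun s => mul b (ld (mul b z) s))
      (fun t => by
        show ld (mul b z) (mul (mul (rd b (mul b z)) (mul b z)) t) = ld (mul b z) (mul b t)
        rw [hQ4])
      (fun s => by
        show mul (mul (rd b (mul b z)) (mul b z)) (ld (mul b z) s) = mul b (ld (mul b z) s)
        rw [hQ4])
    have B3 := (hCinv (mul b z) (rd (mul a b) (mul b z))).congr
      (fun t => ld (mul a b) (mul (mul b z) t)) (fun s => mul (mul b z) (ld (mul a b) s))
      (fun t => by
        show ld (mul (rd (mul a b) (mul b z)) (mul b z)) (mul (mul b z) t) =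
          ld (mul a b) (mul (mul b z) t)
        rw [hQ4])
      (fun s => by
        show mul (mul b z) (ld (mul (rd (mul a b) (mul b z)) (mul b z)) s) =
          mul (mul b z) (ld (mul a b) s)
        rw [hQ4])
    have W := B1.comp ((hC b a).comp B3)
    have Wid := W.congr (fun t => t)
      (fun s => mul b (ld (mul b z) (mul (mul a b) (ld b (mul (mul b z) (ld (mul a b) s))))))
      (fun t => by
        show ld (mul b z) (mul b (ld b (mul (mul a b) (ld (mul a b) (mul (mul b z) t))))) = t
        rw [hQ2, hQ2, hQ1])
      (fun s => rfl)
    obtain ⟨hγv, hNh⟩ := Wid.nuclear hL hR (fun t => rfl)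
    have hγv' : ∀ v, mul b (ld (mul b z) (mul (mul a b) (ld b (mul (mul b z) (ld (mul a b) v))))) =
        mul (mul b (ld (mul b z) (mul (mul a b) (ld b (mul (mul b z) (ld (mul a b) e)))))) v := hγv
    have hNh' : ∀ s t,
        mul (mul b (ld (mul b z) (mul (mul a b) (ld b (mul (mul b z) (ld (mul a b) e)))))) (mul s t) =
        mul (mul (mul b (ld (mul b z) (mul (mul a b) (ld b (mul (mul b z) (ld (mul a b) e)))))) s) t := hNh
    have key := hγv' (mul a b)
    simp only [ldself, hR, hQ1] at key
    obtain ⟨m, hm, hHw⟩ := push _ hNh' (mul a b)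
    obtain ⟨m₁, hm₁, hc1⟩ := comm a b
    have hmrho := mu_rho m hm
    have hm₂ := Nmu_mul m₁ m hm₁ hm
    have hm₂rho := mu_rho _ hm₂
    have hr1 : mul (mul a b) m = mul b (mul a (mul m₁ m)) := by
      rw [hc1, ← hmrho (mul b a) m₁, ← hm₂rho b a]
    rw [hHw, hr1] at key
    have key2 : ld (mul b z) (mul (mul a b) z) = mul a (mul m₁ m) := by
      have h5 := congrArg (ld b) key
      rw [hQ1, hQ1] at h5
      exact h5
    have key3 : mul (mul a b) z = mul (mul b z) (mul a (mul m₁ m)) := by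
      have h6 := congrArg (mul (mul b z)) key2
      rw [hQ2] at h6
      exact h6
    rw [hm₂rho (mul b z) a] at key3
    obtain ⟨m₃, hm₃, hc2⟩ := comm (mul b z) a
    rw [hc2] at key3
    rw [← hm₂rho (mul a (mul b z)) m₃] at key3
    exact ⟨mul m₃ (mul m₁ m), Nmu_mul m₃ (mul m₁ m) hm₃ hm₂, key3⟩
  refine ⟨fun x y => ?_, fun x y z => ?_⟩
  · obtain ⟨n, hn, he⟩ := comm x y
    exact ⟨n, mem_nuc n hn, he⟩
  · obtain ⟨n, hn, he⟩ := assoc x y z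
    exact ⟨n, mem_nuc n hn, he⟩
end

section
/- Every conjugacy closed loop is a G-loop: every principal isotope of a CC-loop $Q$ is isomorphic to $Q$. -/
/-- every conjugacy closed loop is a G-loop: every principal isotope
`x ∘ y = (x/a)(b\y)` of a CC-loop `Q` is isomorphic to `Q`. -/
theorem cc_loop_is_Gloop (Q : Type*) (mul ld rd : Q → Q → Q) (e : Q)
    (hQ1 : ∀ x y, ld x (mul x y) = y) (hQ2 : ∀ x y, mul x (ld x y) = y)
    (hQ3 : ∀ x y, rd (mul x y) y = x) (hQ4 : ∀ x y, mul (rd x y) y = x)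
    (hL : ∀ x, mul e x = x) (hR : ∀ x, mul x e = x)
    (hCCL : ∀ x y, ∃ z, ∀ u, ld x (mul y (mul x u)) = mul z u)
    (hCCR : ∀ x y, ∃ w, ∀ u, rd (mul (mul u x) y) x = mul u w) :
    ∀ a b : Q, ∃ f : Q ≃ Q, ∀ x y : Q,
      f (mul (rd x a) (ld b y)) = mul (f x) (f y) := by
  -- Identity (A): z(xy) = ((zx)/z)(zy)
  have A : ∀ z x y, mul z (mul x y) = mul (rd (mul z x) z) (mul z y) := by
    intro z x y
    obtain ⟨w, hw⟩ := hCCL z (rd (mul z x) z)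
    have hwx : w = x := by
      have h := hw e
      rw [hR, hR, hQ4, hQ1] at h
      exact h.symm
    have h := hw y
    rw [hwx] at h
    calc mul z (mul x y) = mul z (ld z (mul (rd (mul z x) z) (mul z y))) := by rw [h]
      _ = mul (rd (mul z x) z) (mul z y) := hQ2 _ _
  -- Identity (B): (xy)z = (xz)(z\(yz))
  have B : ∀ z x y, mul (mul x y) z = mul (mul x z) (ld z (mul y z)) := by
    intro z x y
    obtain ⟨w, hw⟩ := hCCR z (ld z (mul y z))
    have hwy : w = y := by
      have h := hw e
      rw [hL, hL, hQ2, hQ3] at h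
      exact h.symm
    have h := hw x
    rw [hwy] at h
    calc mul (mul x y) z = mul (rd (mul (mul x z) (ld z (mul y z))) z) z := by rw [h]
      _ = mul (mul x z) (ld z (mul y z)) := hQ4 _ _
  intro a b
  set ba := mul b a with hba
  -- ψ : Q → Q, the composite R'_{ba} ∘ L_a
  set ψ : Q → Q := fun x => mul (rd (mul a x) a) ba with hψ
  set ψi : Q → Q := fun y => ld a (mul (rd y ba) a) with hψi
  have hli : Function.LeftInverse ψi ψ := by
    intro x
    simp only [hψ, hψi, hQ3, hQ4, hQ1]
  have hri : Function.RightInverse ψi ψ := by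
    intro y
    simp only [hψ, hψi, hQ2, hQ3, hQ4]
  -- ψ is a homomorphism from (Q, mul) to the isotope
  have hom : ∀ x y, ψ (mul x y) = mul (rd (ψ x) a) (ld b (ψ y)) := by
    intro x y
    set z₀ := ld a ba with hz₀
    have haz : mul a z₀ = ba := hQ2 a ba
    -- key divisibility fact
    have key : mul a (ld z₀ (mul y z₀)) = ld b (mul a (mul y z₀)) := by
      have h1 : mul b (mul a (ld z₀ (mul y z₀))) = mul a (mul y z₀) := by
        have h2 := A a z₀ (ld z₀ (mul y z₀))
        rw [hQ2, haz] at h2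
        rw [hba, hQ3] at h2
        exact h2.symm
      rw [← h1, hQ1]
    calc ψ (mul x y)
        = mul (rd (mul a (mul x y)) a) ba := rfl
      _ = mul (rd (mul (rd (mul a x) a) (mul a y)) a) ba := by rw [← A]
      _ = mul (rd (mul (rd (mul a x) a) (mul a y)) a) (mul a z₀) := by rw [haz]
      _ = mul a (mul (mul x y) z₀) := by rw [← A, ← A]
      _ = mul a (mul (mul x z₀) (ld z₀ (mul y z₀))) := by rw [B]
      _ = mul (rd (mul a (mul x z₀)) a) (mul a (ld z₀ (mul y z₀))) := A a _ _
      _ = mul (rd (mul a (mul x z₀)) a) (ld b (mul a (mul y z₀))) := by rw [key]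
      _ = mul (rd (mul (rd (mul a x) a) (mul a z₀)) a) (ld b (mul (rd (mul a y) a) (mul a z₀))) := by
            rw [← A, ← A]
      _ = mul (rd (ψ x) a) (ld b (ψ y)) := by rw [haz]
  refine ⟨⟨ψi, ψ, hri, hli⟩, ?_⟩
  intro x y
  have h := hom (ψi x) (ψi y)
  simp only [Equiv.coe_fn_mk]
  rw [hri x, hri y] at h
  rw [← h]
  exact hli _
end

section
/- The identity $[w((x^{-1}w)^{-1}z)][(yz)^{-1}y] = x$ is a single axiom for group theory: a set with a binary operation $\cdot$ and unary operation ${}^{-1}$ satisfying this identity (for all $w,x,y,z$) is a group, i.e., $\cdot$ is associative, there is a two-sided neutral element, and ${}^{-1}$ gives two-sided inverses. Conversely, every group satisfies this identity. -/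
/-- McCune: `[w((x⁻¹w)⁻¹z)][(yz)⁻¹y] = x` is a single axiom for
group theory in terms of product and inverse. -/
theorem mccune_single_axiom (G : Type*) [Nonempty G] (mul : G → G → G) (inv : G → G) :
    (∀ w x y z : G,
        mul (mul w (mul (inv (mul (inv x) w)) z)) (mul (inv (mul y z)) y) = x) ↔
      ((∀ x y z : G, mul x (mul y z) = mul (mul x y) z) ∧
       ∃ e : G, (∀ x, mul e x = x ∧ mul x e = x) ∧
         ∀ x, mul x (inv x) = e ∧ mul (inv x) x = e) := by
  constructor
  · intro hax
    obtain ⟨a⟩ := ‹Nonempty G›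
    have q1 : ∀ a0 a1 a2 a3 : G, (mul (mul a1 (mul (inv (mul (inv a0) a1)) a2)) (mul (inv (mul a3 a2)) a3)) = a0 := fun a0 a1 a2 a3 => hax a1 a0 a3 a2
    have q2 : ∀ a0 a1 a2 a3 a4 a5 : G, (mul (mul a1 (mul (inv (mul (inv a0) a1)) (mul (inv (mul a2 a3)) a2))) (mul (inv a4) (mul a5 (mul (inv (mul (inv a4) a5)) a3)))) = a0 := by
      intro a0 a1 a2 a3 a4 a5
      have t := (q1 a0 a1 (mul (inv (mul a2 a3)) a2) (mul a5 (mul (inv (mul (inv a4) a5)) a3)))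
      rw [q1 a4 a5 a3 a2] at t
      exact t
    have q3 : ∀ a0 a1 a2 a3 a4 a5 a6 : G, (mul a1 (mul (inv (mul a2 (mul a3 (mul (inv (mul (inv (mul (inv a0) (mul a4 (mul (inv (mul (inv a1) a4)) (mul (inv (mul a5 a6)) a5))))) a3)) a6)))) a2)) = a0 := by
      intro a0 a1 a2 a3 a4 a5 a6
      have t := (q1 a0 (mul a4 (mul (inv (mul (inv a1) a4)) (mul (inv (mul a5 a6)) a5))) (mul a3 (mul (inv (mul (inv (mul (inv a0) (mul a4 (mul (inv (mul (inv a1) a4)) (mul (inv (mul a5 a6)) a5))))) a3)) a6)) a2)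
      rw [q2 a1 a4 a5 a6 (mul (inv a0) (mul a4 (mul (inv (mul (inv a1) a4)) (mul (inv (mul a5 a6)) a5)))) a3] at t
      exact t
    have q5 : ∀ a0 a1 a2 a3 a4 a5 a6 a7 a8 : G, (mul (mul a1 (mul (inv (mul (inv a0) a1)) (mul (inv (mul a2 (mul a3 (mul (inv (mul (inv (mul (inv a4) (mul a5 (mul (inv (mul (inv a6) a5)) (mul (inv (mul a7 a8)) a7))))) a3)) a8)))) a2))) (mul (inv a4) a6)) = a0 := by
      intro a0 a1 a2 a3 a4 a5 a6 a7 a8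
      have t := (q2 a0 a1 a2 (mul a3 (mul (inv (mul (inv (mul (inv a4) (mul a5 (mul (inv (mul (inv a6) a5)) (mul (inv (mul a7 a8)) a7))))) a3)) a8)) a4 (mul a5 (mul (inv (mul (inv a6) a5)) (mul (inv (mul a7 a8)) a7))))
      rw [q2 a6 a5 a7 a8 (mul (inv a4) (mul a5 (mul (inv (mul (inv a6) a5)) (mul (inv (mul a7 a8)) a7)))) a3] at t
      exact t
    have q6 : ∀ a0 a1 a2 : G, (mul (mul a1 a2) (mul (inv a2) (inv (mul (inv a0) a1)))) = a0 := by
      intro a0 a1 a2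
      have t := (q5 a0 a1 a a a2 a (inv (mul (inv a0) a1)) a a)
      rw [q3 a2 (inv (mul (inv a0) a1)) a a a a a] at t
      exact t
    have q8 : ∀ a0 a1 a2 a3 a4 : G, (mul a1 (mul (inv (mul (inv (mul a2 a3)) a2)) (inv (mul (inv a0) (mul a4 (mul (inv (mul (inv a1) a4)) a3)))))) = a0 := by
      intro a0 a1 a2 a3 a4
      have t := (q6 a0 (mul a4 (mul (inv (mul (inv a1) a4)) a3)) (mul (inv (mul a2 a3)) a2))
      rw [q1 a1 a4 a3 a2] at t
      exact t
    have q9 : ∀ a0 a1 a2 a3 a4 : G, (mul a2 (mul (inv (mul a3 (inv (mul (inv a2) (mul a4 (mul (inv (mul (inv a0) a4)) a1)))))) a3)) = (mul a0 a1) := by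
      intro a0 a1 a2 a3 a4
      have t := (q1 (mul a0 a1) a0 (inv (mul (inv a2) (mul a4 (mul (inv (mul (inv a0) a4)) a1)))) a3)
      rw [q8 a2 a0 a0 a1 a4] at t
      exact t
    have q13 : ∀ a0 a1 a2 a3 a4 a5 : G, (mul a4 (mul (inv (mul a5 (inv (mul (inv a4) a2)))) a5)) = (mul (mul a0 a1) (inv (mul (inv a2) (mul a3 (mul (inv (mul (inv a0) a3)) a1))))) := by
      intro a0 a1 a2 a3 a4 a5
      have t := (q9 (mul a0 a1) (inv (mul (inv a2) (mul a3 (mul (inv (mul (inv a0) a3)) a1)))) a4 a5 a0)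
      rw [q8 a2 a0 a0 a1 a3] at t
      exact t
    have q14 : ∀ a0 a1 a2 a3 a4 : G, (mul a2 (mul (inv (mul a3 (mul (inv (mul a4 (inv (mul (inv a3) a2)))) a4))) (mul a0 a1))) = (mul a0 a1) := by
      intro a0 a1 a2 a3 a4
      have t := (q9 a0 a1 a2 (mul a0 a1) a)
      rw [← q13 a0 a1 a2 a a3 a4] at t
      exact t
    have q15 : ∀ a0 a1 a2 a3 : G, (mul a1 (mul (inv (mul a2 (mul (inv (mul a3 (inv (mul (inv a2) a1)))) a3))) a0)) = a0 := by
      intro a0 a1 a2 a3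
      have t := (q14 (mul a (mul (inv (mul (inv a0) a)) a)) (mul (inv (mul a a)) a) a1 a2 a3)
      rw [q1 a0 a a a] at t
      exact t
    have q16 : ∀ a0 a1 a2 a3 : G, (mul (mul a1 (mul (inv (mul (inv a2) a1)) a3)) (mul (inv (mul a2 a3)) a0)) = a0 := by
      intro a0 a1 a2 a3
      have t := (q15 a0 (mul a1 (mul (inv (mul (inv a2) a1)) a3)) a a)
      rw [q9 a2 a3 a a a1] at t
      exact t
    have q17 : ∀ a0 a1 a2 a3 : G, a1 = (mul a0 (mul (inv (mul (inv (mul a1 (mul (inv (mul a2 a3)) a2))) a0)) a3)) := by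
      intro a0 a1 a2 a3
      have t := (q16 (mul a0 (mul (inv (mul (inv (mul a1 (mul (inv (mul a2 a3)) a2))) a0)) a3)) a a1 (mul (inv (mul a2 a3)) a2))
      rw [q2 a1 a a2 a3 (mul a1 (mul (inv (mul a2 a3)) a2)) a0] at t
      exact t
    have q18 : ∀ a0 a1 a2 a3 : G, (mul a0 (mul (inv (mul a3 a2)) a3)) = (mul a0 (mul (inv (mul a1 a2)) a1)) := by
      intro a0 a1 a2 a3
      have t := (q1 (mul a0 (mul (inv (mul a1 a2)) a1)) a a2 a3)
      rw [← q17 a a0 a1 a2] at t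
      exact t
    have q19 : ∀ a0 a1 a2 a3 : G, (mul a1 (mul (inv (mul (mul a1 (mul (inv (mul a2 a3)) a2)) a3)) a0)) = a0 := by
      intro a0 a1 a2 a3
      have t := (q16 a0 a (mul a1 (mul (inv (mul a2 a3)) a2)) a3)
      rw [← q17 a a1 a2 a3] at t
      exact t
    have q20 : ∀ a0 a1 a2 : G, (mul (mul (inv (mul a1 (inv a2))) a1) (mul (inv a2) a0)) = a0 := by
      intro a0 a1 a2
      have t := (q19 a0 (mul (inv (mul a1 (inv a2))) a1) (inv a2) (mul (inv (mul a1 (inv a2))) a1))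
      rw [q1 a2 (mul (inv (mul a1 (inv a2))) a1) (inv a2) a1] at t
      exact t
    have q21 : ∀ a0 a1 : G, a0 = (inv (mul (inv a0) (inv (mul a1 (inv a1))))) := by
      intro a0 a1
      have t := (q20 (inv (mul (inv a0) (inv (mul a1 (inv a1))))) a1 a1)
      rw [q6 a0 (inv (mul a1 (inv a1))) a1] at t
      exact t
    have q22 : ∀ a0 a1 a2 : G, (mul (mul (inv (mul a1 a2)) a1) (mul a2 a0)) = a0 := by
      intro a0 a1 a2
      have t := (q20 a0 a1 (mul (inv a2) (inv (mul a (inv a)))))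
      rw [← q21 a2 a] at t
      exact t
    have q24 : ∀ a0 a1 a2 : G, (mul (mul a1 (inv a1)) (mul (inv (mul a2 (inv a2))) a0)) = a0 := by
      intro a0 a1 a2
      have t := (q20 a0 (inv a1) (mul a2 (inv a2)))
      rw [← q21 a1 a2] at t
      exact t
    have q25 : ∀ a0 a1 a2 : G, (mul a1 (mul (inv (mul (inv (mul a2 (inv a2))) a1)) a0)) = a0 := by
      intro a0 a1 a2
      have t := (q15 a0 a1 (mul a2 (inv a2)) (mul (inv (mul a2 (inv a2))) a1))
      rw [q24 (mul (inv (mul a2 (inv a2))) a1) a2 (mul (inv (mul a2 (inv a2))) a1)] at t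
      exact t
    have q26 : ∀ a0 a1 a2 : G, (mul a1 (mul (inv (mul a2 a1)) a2)) = (mul a0 (inv a0)) := by
      intro a0 a1 a2
      have t := (q1 (mul a0 (inv a0)) a a1 a2)
      rw [q25 a1 a a0] at t
      exact t
    have q27 : ∀ a0 a1 : G, (mul a1 (inv a1)) = (mul a0 (inv a0)) := by
      intro a0 a1
      have t := (q26 a0 a a)
      rw [q26 a1 a a] at t
      exact t
    have q28 : ∀ a0 a1 : G, (inv (mul a1 (inv a1))) = (mul a0 (inv a0)) := by
      intro a0 a1
      have t := (q26 a0 a (inv (mul a1 (inv a1))))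
      rw [q25 (inv (mul a1 (inv a1))) a a1] at t
      exact t
    have q29 : ∀ a0 a1 : G, (inv (mul (inv a0) (mul a1 (inv a1)))) = a0 := by
      intro a0 a1
      have t := (q21 a0 a).symm
      rw [q28 a1 a] at t
      exact t
    have q35 : ∀ a0 a1 a2 : G, (mul a1 (mul (inv (mul (mul a2 (inv a2)) a1)) a0)) = a0 := by
      intro a0 a1 a2
      have t := (q16 a0 a (mul a2 (inv a2)) a1)
      rw [q25 a1 a a2] at t
      exact t
    have q37 : ∀ a0 a1 a2 : G, (mul (mul (mul a1 (inv a1)) a2) (mul (inv a2) a0)) = a0 := by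
      intro a0 a1 a2
      have t := (q20 a0 a2 a2)
      rw [q28 a1 a2] at t
      exact t
    have q45 : ∀ a0 a1 a2 : G, (mul (mul a1 (inv a1)) (mul (inv (mul a2 (inv a0))) a2)) = a0 := by
      intro a0 a1 a2
      have t := (q24 a0 a1 a0)
      rw [q18 (mul a1 (inv a1)) a2 (inv a0) a0] at t
      exact t
    have q60 : ∀ a0 a1 a2 : G, (mul a1 (mul (inv (mul (inv (mul a2 (inv a1))) a2)) a0)) = a0 := by
      intro a0 a1 a2
      have t := (q37 a0 a (mul (inv (mul a2 (inv a1))) a2))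
      rw [q45 a1 a a2] at t
      exact t
    have q61 : ∀ a0 a1 a2 : G, (mul a1 (mul (mul (mul a2 (inv a2)) (inv a1)) a0)) = a0 := by
      intro a0 a1 a2
      have t := (q60 a0 a1 (mul a2 (inv a2)))
      rw [q29 (mul (mul a2 (inv a2)) (inv a1)) a2] at t
      exact t
    have q62 : ∀ a0 a1 : G, (mul a0 a1) = (mul (inv (inv a0)) a1) := by
      intro a0 a1
      have t := (q61 (mul (inv (inv a0)) a1) a0 a)
      rw [q37 a1 a (inv a0)] at t
      exact t
    have q63 : ∀ a0 a1 : G, (inv (mul a0 (mul a1 (inv a1)))) = (inv a0) := by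
      intro a0 a1
      have t := (q29 (inv a0) a1)
      rw [← q62 a0 (mul a1 (inv a1))] at t
      exact t
    have q64 : ∀ a0 : G, a0 = (inv (inv a0)) := by
      intro a0
      have t := (q63 (inv a0) a)
      rw [q29 a0 a] at t
      exact t
    have q65 : ∀ a0 a1 : G, (mul (inv a1) a1) = (mul a0 (inv a0)) := by
      intro a0 a1
      have t := (q27 a0 (inv a1))
      rw [← q64 a1] at t
      exact t
    have q66 : ∀ a0 a1 : G, (mul (inv a1) a1) = (mul (inv a0) a0) := by
      intro a0 a1
      have t := (q65 (inv a1) a0).symm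
      rw [← q64 a1] at t
      exact t
    have q69 : ∀ a0 a1 : G, (inv a0) = (mul (inv a0) (mul a1 (inv a1))) := by
      intro a0 a1
      have t := (q64 (mul (inv a0) (mul a1 (inv a1)))).symm
      rw [q29 a0 a1] at t
      exact t
    have q70 : ∀ a0 a1 : G, (mul a0 (mul a1 (inv a1))) = a0 := by
      intro a0 a1
      have t := (q69 (mul (inv a0) (inv (mul a (inv a)))) a1).symm
      rw [← q21 a0 a] at t
      exact t
    have q71 : ∀ a0 a1 : G, (mul a0 (mul (inv a1) a1)) = a0 := by
      intro a0 a1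
      have t := (q70 a0 (inv a1))
      rw [← q64 a1] at t
      exact t
    have q72 : ∀ a0 a1 : G, (mul (mul a1 (inv a1)) a0) = a0 := by
      intro a0 a1
      have t := (q71 a0 (mul (mul a1 (inv a1)) a0))
      rw [q35 (mul (mul a1 (inv a1)) a0) a0 a1] at t
      exact t
    have q73 : ∀ a0 a1 : G, (mul a1 (mul (inv a1) a0)) = a0 := by
      intro a0 a1
      have t := (q35 a0 a1 a)
      rw [q72 a1 a] at t
      exact t
    have q74 : ∀ a0 a1 : G, (mul (mul (inv a1) a1) a0) = a0 := by
      intro a0 a1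
      have t := (q72 a0 (inv a1))
      rw [← q64 a1] at t
      exact t
    have q76 : ∀ a0 a1 : G, (inv a1) = (mul (inv (mul a0 a1)) a0) := by
      intro a0 a1
      have t := (q70 (mul (inv (mul a0 a1)) a0) a1)
      rw [q22 (inv a1) a0 a1] at t
      exact t
    have q87 : ∀ a0 a1 : G, (mul (inv a1) a0) = (inv (mul (inv a0) a1)) := by
      intro a0 a1
      have t := (q76 a0 (mul (inv a0) a1)).symm
      rw [q73 a1 a0] at t
      exact t
    have q89 : ∀ a0 a1 a2 : G, (mul a1 a2) = (mul a0 (mul (mul (inv a0) a1) a2)) := by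
      intro a0 a1 a2
      have t := (q71 (mul a0 (mul (inv (mul (inv a1) a0)) a2)) (mul a1 a2))
      rw [q16 (mul a1 a2) a0 a1 a2] at t
      rw [← q87 a1 a0] at t
      exact t
    have q90 : ∀ a0 a1 a2 : G, (mul (mul a0 a1) a2) = (mul a0 (mul a1 a2)) := by
      intro a0 a1 a2
      have t := (q89 (mul a0 a1) a0 (mul a1 a2)).symm
      rw [q22 a2 a0 a1] at t
      exact t
    refine ⟨fun x y z => (q90 x y z).symm, mul (inv a) a, fun x => ⟨q74 x a, q71 x a⟩, fun x => ⟨(q65 x a).symm, q66 a x⟩⟩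
  · rintro ⟨assoc, e, he, hinv⟩
    letI : Mul G := ⟨mul⟩
    letI : Inv G := ⟨inv⟩
    letI : One G := ⟨e⟩
    letI : Group G := Group.ofLeftAxioms (fun a b c => (assoc a b c).symm)
      (fun a => (he a).1) (fun a => (hinv a).2)
    intro w x y z
    show (w * ((x⁻¹ * w)⁻¹ * z)) * ((y*z)⁻¹ * y) = x
    group
end
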